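/- arXiv:2201.08767 — 5 statements merged into one kernel-verified Lean document; each statement's English description precedes it below -/
import Mathlib

section
/- Let k ≥ 3 and let q be a prime power with q ≤ k − 1. Then there exists a k-edge-colouring of K_ℕ in which every monochromatic path P satisfies d̄(P) ≤ 1/q. -/
open Filter

/-- Upper density of a set of positive integers:
`limsup_{n→∞} |A ∩ {1,…,n}| / n`. -/
noncomputable def upperDensity (A : Set ℕ+) : ℝ :=
  Filter.limsup (fun n : ℕ => (Nat.card {a : ℕ+ // a ∈ A ∧ (a : ℕ) ≤ n} : ℝ) / n) Filter.atTop

/-- Adjacency in the complete bipartite graph with parts `V` and `W`. -/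
def bipAdj (V W : Set ℕ+) (x y : ℕ+) : Prop :=
  (x ∈ V ∧ y ∈ W) ∨ (x ∈ W ∧ y ∈ V)

/-- Adjacency in the complete graph on the positive integers. -/
def completeAdj (x y : ℕ+) : Prop := x ≠ y

/-- `P` is the vertex set of a (finite or one-way infinite) path of colour `i`
in the graph with adjacency `Adj`, whose edges are coloured by `c`. -/
def IsMonoPath {k : ℕ} (Adj : ℕ+ → ℕ+ → Prop) (c : Sym2 ℕ+ → Fin k) (i : Fin k)
    (P : Set ℕ+) : Prop :=
  (∃ (n : ℕ) (f : Fin n → ℕ+), Function.Injective f ∧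
    (∀ (j : ℕ) (h : j + 1 < n),
      Adj (f ⟨j, Nat.lt_of_succ_lt h⟩) (f ⟨j + 1, h⟩) ∧
      c s(f ⟨j, Nat.lt_of_succ_lt h⟩, f ⟨j + 1, h⟩) = i) ∧
    P = Set.range f) ∨
  (∃ f : ℕ → ℕ+, Function.Injective f ∧
    (∀ j : ℕ, Adj (f j) (f (j + 1)) ∧ c s(f j, f (j + 1)) = i) ∧
    P = Set.range f)

section auxStmt2

set_option linter.unusedSectionVars false

variable {F : Type} [Field F] [Fintype F]

/-- The invariant of the line of direction `d` through a point of the plane `F × F`: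
for vertical lines (`d = none`) the `x`-coordinate, for slope `s` the intercept. -/
noncomputable def lineInv (d : Option F) (P : F × F) : F :=
  match d with
  | none => P.1
  | some s => P.2 - s * P.1

/-- The direction of the line through two points of the plane. -/
noncomputable def dirF (P Q : F × F) : Option F := by
  classical exact if P.1 = Q.1 then none else some ((Q.2 - P.2) / (Q.1 - P.1))

lemma dirF_comm (P Q : F × F) : dirF P Q = dirF Q P := by
  classical
  unfold dirF
  by_cases h : P.1 = Q.1
  · simp [h]
  · rw [if_neg h, if_neg (Ne.symm h)]
    congr 1
    rw [div_eq_div_iff (sub_ne_zero.2 (fun e => h e.symm)) (sub_ne_zero.2 h)]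
    ring

lemma lineInv_dirF (P Q : F × F) : lineInv (dirF P Q) P = lineInv (dirF P Q) Q := by
  classical
  unfold dirF
  by_cases h : P.1 = Q.1
  · simp [lineInv, h]
  · rw [if_neg h]
    show P.2 - _ * P.1 = Q.2 - _ * Q.1
    have h' : Q.1 - P.1 ≠ 0 := sub_ne_zero.2 (fun e => h e.symm)
    field_simp
    ring

lemma card_line (d : Option F) (t : F) :
    Nat.card {P : F × F // lineInv d P = t} = Fintype.card F := by
  rw [← Nat.card_eq_fintype_card]
  apply Nat.card_congr
  cases d with
  | none =>
    refine ⟨fun P => P.1.2, fun y => ⟨(t, y), rfl⟩, fun P => ?_, fun y => rfl⟩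
    obtain ⟨⟨a, b⟩, h⟩ := P
    have : a = t := h
    subst this
    rfl
  | some s =>
    refine ⟨fun P => P.1.1, fun x => ⟨(x, t + s * x), by simp [lineInv]⟩, fun P => ?_, fun y => rfl⟩
    have h : P.1.2 - s * P.1.1 = t := P.2
    ext
    · rfl
    · show t + s * P.1.1 = P.1.2
      linear_combination -h

lemma count_le {q : ℕ} (hq : 0 < q)
    (hcard : Fintype.card F = q) (e : Fin (q * q) ≃ F × F)
    (pt : ℕ+ → F × F)
    (hpt : ∀ v : ℕ+, pt v = e ⟨((v : ℕ) - 1) % (q * q), Nat.mod_lt _ (Nat.mul_pos hq hq)⟩)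
    (A : Set ℕ+) (d : Option F) (t : F) (hA : ∀ a ∈ A, lineInv d (pt a) = t) (n : ℕ) :
    Nat.card {a : ℕ+ // a ∈ A ∧ (a : ℕ) ≤ n} ≤ q * (n / (q * q) + 1) := by
  have hm : 0 < q * q := Nat.mul_pos hq hq
  set g : {a : ℕ+ // a ∈ A ∧ (a : ℕ) ≤ n} → {P : F × F // lineInv d P = t} × Fin (n / (q * q) + 1) :=
    fun a => (⟨pt a.1, hA a.1 a.2.1⟩,
      ⟨((a.1 : ℕ) - 1) / (q * q), by
        have h1 : ((a.1 : ℕ) - 1) / (q * q) ≤ n / (q * q) :=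
          Nat.div_le_div_right (le_trans (Nat.sub_le _ _) a.2.2)
        omega⟩) with hg
  have hinj : Function.Injective g := by
    intro a b hab
    have h1 : pt a.1 = pt b.1 := congrArg Subtype.val (congrArg Prod.fst hab)
    have h2 : ((a.1 : ℕ) - 1) / (q * q) = ((b.1 : ℕ) - 1) / (q * q) :=
      congrArg Fin.val (congrArg Prod.snd hab)
    rw [hpt, hpt] at h1
    have h3 : ((a.1 : ℕ) - 1) % (q * q) = ((b.1 : ℕ) - 1) % (q * q) :=
      congrArg Fin.val (e.injective h1)
    have h4 : (a.1 : ℕ) - 1 = (b.1 : ℕ) - 1 := by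
      conv_lhs => rw [← Nat.div_add_mod ((a.1 : ℕ) - 1) (q * q)]
      conv_rhs => rw [← Nat.div_add_mod ((b.1 : ℕ) - 1) (q * q)]
      rw [h2, h3]
    have ha1 : 1 ≤ (a.1 : ℕ) := a.1.one_le
    have hb1 : 1 ≤ (b.1 : ℕ) := b.1.one_le
    have : (a.1 : ℕ) = (b.1 : ℕ) := by omega
    exact Subtype.ext (PNat.coe_injective this)
  have h := Nat.card_le_card_of_injective g hinj
  rw [Nat.card_prod, card_line, hcard] at h
  simpa using h

end auxStmt2

lemma upperDensity_le_aux (A : Set ℕ+) (q m : ℕ) (hq : 0 < q) (hm : m = q * q)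
    (hcount : ∀ n : ℕ, Nat.card {a : ℕ+ // a ∈ A ∧ (a : ℕ) ≤ n} ≤ q * (n / m + 1)) :
    upperDensity A ≤ 1 / q := by
  have hm0 : 0 < m := hm ▸ Nat.mul_pos hq hq
  have hq0 : (q : ℝ) ≠ 0 := Nat.cast_ne_zero.2 hq.ne'
  have hm0' : (m : ℝ) ≠ 0 := Nat.cast_ne_zero.2 hm0.ne'
  set f : ℕ → ℝ := fun n => (Nat.card {a : ℕ+ // a ∈ A ∧ (a : ℕ) ≤ n} : ℝ) / n with hf
  set g : ℕ → ℝ := fun n => 1 / q + q / n with hg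
  have hqm : (q : ℝ) / m = 1 / q := by
    rw [hm]; push_cast; field_simp
  have hfg : f ≤ᶠ[atTop] g := by
    filter_upwards [eventually_ge_atTop 1] with n hn
    have hn0 : (0 : ℝ) < n := by exact_mod_cast hn
    have h1 : (Nat.card {a : ℕ+ // a ∈ A ∧ (a : ℕ) ≤ n} : ℝ) ≤ q * ((n : ℝ) / m + 1) := by
      calc (Nat.card {a : ℕ+ // a ∈ A ∧ (a : ℕ) ≤ n} : ℝ) ≤ ((q * (n / m + 1) : ℕ) : ℝ) := by
            exact_mod_cast hcount n
        _ ≤ q * ((n : ℝ) / m + 1) := by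
            push_cast
            gcongr
            exact Nat.cast_div_le
    have : f n ≤ (q * ((n : ℝ) / m + 1)) / n := by
      show (Nat.card {a : ℕ+ // a ∈ A ∧ (a : ℕ) ≤ n} : ℝ) / n ≤ (q * ((n : ℝ) / m + 1)) / n
      gcongr
    refine this.trans ?_
    rw [hg]
    have : (q : ℝ) * ((n : ℝ) / m + 1) / n = q / m + q / n := by
      field_simp
    rw [this, hqm]
  have hgtend : Tendsto g atTop (nhds (1 / q)) := by
    rw [hg]
    have h2 : Tendsto (fun n : ℕ => (q : ℝ) / n) atTop (nhds 0) :=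
      tendsto_const_div_atTop_nhds_zero_nat (q : ℝ)
    simpa using tendsto_const_nhds.add h2
  have h1 : limsup g atTop = 1 / q := hgtend.limsup_eq
  rw [upperDensity, ← hf, ← h1]
  refine Filter.limsup_le_limsup hfg ?_ ?_
  · refine Filter.isCoboundedUnder_le_of_le atTop (f := f) (x := 0) fun n => ?_
    simp only [hf]
    positivity
  · exact hgtend.isBoundedUnder_le

/-- For `k ≥ 3` and a prime power `q ≤ k - 1`, there is a `k`-edge-colouring of
`K_ℕ` in which every monochromatic path has upper density at most `1/q`. -/
theorem stmt_2 (k q : ℕ) (hk : 3 ≤ k) (hq : IsPrimePow q) (hqk : q ≤ k - 1) :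
    ∃ c : Sym2 ℕ+ → Fin k, ∀ (i : Fin k) (P : Set ℕ+),
      IsMonoPath completeAdj c i P → upperDensity P ≤ 1 / q := by
  obtain ⟨p, nn, hp, hnn, hq'⟩ := hq
  have hp' : p.Prime := Nat.prime_iff.mpr hp
  haveI : Fact p.Prime := ⟨hp'⟩
  have hq0 : 0 < q := hq'.symm ▸ pow_pos hp'.pos nn
  set F := GaloisField p nn with hF
  haveI : Fintype F := Fintype.ofFinite F
  have hcard : Fintype.card F = q := by
    rw [← Nat.card_eq_fintype_card, GaloisField.card p nn hnn.ne', hq']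
  have e : Fin (q * q) ≃ F × F :=
    (Fintype.equivFinOfCardEq (by rw [Fintype.card_prod, hcard])).symm
  set pt : ℕ+ → F × F :=
    fun v => e ⟨((v : ℕ) - 1) % (q * q), Nat.mod_lt _ (Nat.mul_pos hq0 hq0)⟩ with hptdef
  obtain ⟨ι⟩ : Nonempty (Option F ↪ Fin k) := by
    apply Function.Embedding.nonempty_of_card_le
    rw [Fintype.card_option, hcard, Fintype.card_fin]
    omega
  set c : Sym2 ℕ+ → Fin k :=
    Sym2.lift ⟨fun x y => ι (dirF (pt x) (pt y)), fun x y => by simp only []; rw [dirF_comm]⟩ with hcdef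
  refine ⟨c, fun i P hP => ?_⟩
  have hc : ∀ x y : ℕ+, c s(x, y) = ι (dirF (pt x) (pt y)) := fun x y => rfl
  have main : ∃ (d : Option F) (t : F), ∀ v ∈ P, lineInv d (pt v) = t := by
    rcases hP with ⟨nl, f, hfinj, hpath, rfl⟩ | ⟨f, hfinj, hpath, rfl⟩
    · match nl, f, hpath with
      | 0, f, hpath =>
        refine ⟨none, 0, fun v hv => ?_⟩
        obtain ⟨j, -⟩ := hv
        exact j.elim0
      | 1, f, hpath =>
        refine ⟨none, lineInv none (pt (f ⟨0, one_pos⟩)), fun v hv => ?_⟩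
        obtain ⟨j, rfl⟩ := hv
        rw [Subsingleton.elim j ⟨0, one_pos⟩]
      | (nl' + 2), f, hpath =>
        set d := dirF (pt (f ⟨0, by omega⟩)) (pt (f ⟨1, by omega⟩)) with hd
        have hιd : ι d = i := by
          have h01 := (hpath 0 (by omega)).2
          rw [hc] at h01
          exact h01
        have key : ∀ j (h : j < nl' + 2),
            lineInv d (pt (f ⟨j, h⟩)) = lineInv d (pt (f ⟨0, by omega⟩)) := by
          intro j
          induction j with
          | zero => intro h; rfl
          | succ j ih =>
            intro h
            have hj : j < nl' + 2 := by omega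
            have hedge := (hpath j h).2
            rw [hc] at hedge
            have hdd : dirF (pt (f ⟨j, hj⟩)) (pt (f ⟨j + 1, h⟩)) = d :=
              ι.injective (by rw [hedge, hιd])
            have hli := lineInv_dirF (pt (f ⟨j, hj⟩)) (pt (f ⟨j + 1, h⟩))
            rw [hdd] at hli
            rw [← hli]
            exact ih hj
        refine ⟨d, lineInv d (pt (f ⟨0, by omega⟩)), fun v hv => ?_⟩
        obtain ⟨⟨j, hj⟩, rfl⟩ := hv
        exact key j hj
    · set d := dirF (pt (f 0)) (pt (f 1)) with hd
      have hιd : ι d = i := by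
        have h01 := (hpath 0).2
        rw [hc] at h01
        exact h01
      have key : ∀ j, lineInv d (pt (f j)) = lineInv d (pt (f 0)) := by
        intro j
        induction j with
        | zero => rfl
        | succ j ih =>
          have hedge := (hpath j).2
          rw [hc] at hedge
          have hdd : dirF (pt (f j)) (pt (f (j + 1))) = d :=
            ι.injective (by rw [hedge, hιd])
          have hli := lineInv_dirF (pt (f j)) (pt (f (j + 1)))
          rw [hdd] at hli
          rw [← hli]
          exact ih
      refine ⟨d, lineInv d (pt (f 0)), fun v hv => ?_⟩
      obtain ⟨j, rfl⟩ := hv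
      exact key j
  obtain ⟨d, t, hdt⟩ := main
  exact upperDensity_le_aux P q (q * q) hq0 rfl
    (fun n => count_le hq0 hcard e pt (fun v => rfl) P d t hdt n)
end

section
/- Let V and W be infinite disjoint sets with V ∪ W = ℕ, and let K_{V,W} be the complete bipartite graph with parts V and W. For every k ∈ ℕ, there exists a k-edge-colouring of K_{V,W} in which every monochromatic path P satisfies d̄(P) ≤ 1/k. -/
open Filter

lemma limsupAux (f : ℕ → ℝ) (c C : ℝ) (h0 : ∀ n, 0 ≤ f n)
    (h : ∀ n : ℕ, 1 ≤ n → f n ≤ c + C / n) :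
    Filter.limsup f Filter.atTop ≤ c := by
  have hg : Tendsto (fun n : ℕ => c + C / n) atTop (nhds c) := by
    simpa using tendsto_const_nhds.add (tendsto_const_div_atTop_nhds_zero_nat C)
  have hle : f ≤ᶠ[atTop] fun n : ℕ => c + C / n :=
    eventually_atTop.2 ⟨1, h⟩
  calc Filter.limsup f Filter.atTop
      ≤ Filter.limsup (fun n : ℕ => c + C / n) Filter.atTop :=
        limsup_le_limsup hle (isCoboundedUnder_le_of_le _ h0) hg.isBoundedUnder_le
    _ = c := hg.limsup_eq

lemma pnatLeFinite (n : ℕ) : {a : ℕ+ | (a : ℕ) ≤ n}.Finite := by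
  have : {a : ℕ+ | (a : ℕ) ≤ n} = (fun a : ℕ+ => (a : ℕ)) ⁻¹' Set.Iic n := rfl
  rw [this]
  exact Set.Finite.preimage (Set.injOn_of_injective PNat.coe_injective) (Set.finite_Iic n)

lemma cardPnatLe (n : ℕ) : {a : ℕ+ | (a : ℕ) ≤ n}.ncard ≤ n := by
  have h := Set.ncard_le_ncard_of_injOn (fun a : ℕ+ => (a : ℕ))
    (fun a ha => by
      simp only [Set.mem_setOf_eq] at ha
      exact Set.mem_Icc.2 ⟨a.one_le, ha⟩ : ∀ a ∈ {a : ℕ+ | (a : ℕ) ≤ n}, (a : ℕ) ∈ Set.Icc 1 n)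
    (Set.injOn_of_injective PNat.coe_injective) ((Set.finite_Icc 1 n))
  calc {a : ℕ+ | (a : ℕ) ≤ n}.ncard ≤ (Set.Icc 1 n).ncard := h
    _ = n := by rw [← Finset.coe_Icc, Set.ncard_coe_finset, Nat.card_Icc]; omega

lemma classCard (k a s : ℕ) : {t : ℕ | t % k = a ∧ t ≤ s}.ncard ≤ s / k + 1 := by
  have h := Set.ncard_le_ncard_of_injOn (fun t : ℕ => t / k)
    (fun t ht => by
      simp only [Set.mem_setOf_eq] at ht ⊢
      exact Set.mem_Iic.2 (Nat.div_le_div_right ht.2) : ∀ t ∈ {t : ℕ | t % k = a ∧ t ≤ s},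
        t / k ∈ Set.Iic (s / k))
    (fun t₁ h₁ t₂ h₂ hdiv => by
      simp only [Set.mem_setOf_eq] at h₁ h₂
      simp only [] at hdiv
      calc t₁ = k * (t₁ / k) + t₁ % k := (Nat.div_add_mod t₁ k).symm
        _ = k * (t₂ / k) + t₂ % k := by rw [show t₁ / k = t₂ / k from hdiv, h₁.1, h₂.1]
        _ = t₂ := Nat.div_add_mod t₂ k)
    (Set.finite_Iic _)
  calc {t : ℕ | t % k = a ∧ t ≤ s}.ncard ≤ (Set.Iic (s / k)).ncard := h
    _ = s / k + 1 := by rw [← Finset.coe_Iic, Set.ncard_coe_finset, Nat.card_Iic]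


/-- rank of `x` in `A`: the number of elements of `A` that are `≤ x`. -/
noncomputable def rk (A : Set ℕ+) (x : ℕ+) : ℕ := {y : ℕ+ | y ∈ A ∧ y ≤ x}.ncard

lemma rk_fin (A : Set ℕ+) (x : ℕ+) : {y : ℕ+ | y ∈ A ∧ y ≤ x}.Finite :=
  (pnatLeFinite (x : ℕ)).subset (fun y hy => by
    simp only [Set.mem_setOf_eq] at hy ⊢; exact_mod_cast hy.2)

lemma rk_strictMono (A : Set ℕ+) {x y : ℕ+} (hy : y ∈ A) (hxy : x < y) :
    rk A x < rk A y := by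
  apply Set.ncard_lt_ncard _ (rk_fin A y)
  constructor
  · exact fun z hz => ⟨hz.1, le_trans hz.2 hxy.le⟩
  · intro hsub
    have := hsub ⟨hy, le_refl y⟩
    exact absurd this.2 (not_le.2 hxy)

lemma rk_injOn (A : Set ℕ+) : Set.InjOn (rk A) A := by
  intro x hx y hy hxy
  by_contra hne
  rcases lt_or_gt_of_ne hne with h | h
  · exact absurd hxy (Nat.ne_of_lt (rk_strictMono A hy h))
  · exact absurd hxy.symm (Nat.ne_of_lt (rk_strictMono A hx h))

lemma rk_le (A : Set ℕ+) {x : ℕ+} {n : ℕ} (hx : (x : ℕ) ≤ n) :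
    rk A x ≤ {a : ℕ+ | a ∈ A ∧ (a : ℕ) ≤ n}.ncard := by
  apply Set.ncard_le_ncard _ ((pnatLeFinite n).subset (fun y hy => hy.2))
  intro y hy
  exact ⟨hy.1, le_trans (by exact_mod_cast hy.2) hx⟩

lemma countP_eq (A : Set ℕ+) (n : ℕ) :
    (Nat.card {a : ℕ+ // a ∈ A ∧ (a : ℕ) ≤ n} : ℝ) =
      ({a : ℕ+ | a ∈ A ∧ (a : ℕ) ≤ n}.ncard : ℝ) := rfl

lemma upperDensity_le_of_count (P : Set ℕ+) (c C : ℝ) (hC : 0 ≤ c)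
    (h : ∀ n : ℕ, 1 ≤ n → ({a : ℕ+ | a ∈ P ∧ (a : ℕ) ≤ n}.ncard : ℝ) / n ≤ c + C / n) :
    upperDensity P ≤ c := by
  unfold upperDensity
  simp only [countP_eq]
  apply limsupAux _ c C
  · intro n
    positivity
  · exact h

lemma upperDensity_finite (P : Set ℕ+) (hP : P.Finite) (c : ℝ) (hc : 0 ≤ c) :
    upperDensity P ≤ c := by
  apply upperDensity_le_of_count P c (P.ncard : ℝ) hc
  intro n hn
  have hn' : (0 : ℝ) < n := by exact_mod_cast hn
  have hsub : ({a : ℕ+ | a ∈ P ∧ (a : ℕ) ≤ n}.ncard : ℝ) ≤ (P.ncard : ℝ) := by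
    exact_mod_cast Set.ncard_le_ncard
      (fun x (hx : x ∈ {a : ℕ+ | a ∈ P ∧ (a : ℕ) ≤ n}) => hx.1) hP
  have : ({a : ℕ+ | a ∈ P ∧ (a : ℕ) ≤ n}.ncard : ℝ) / n ≤ (P.ncard : ℝ) / n := by
    gcongr
  linarith [this, div_nonneg (Nat.cast_nonneg P.ncard) hn'.le]

lemma density_main (V W : Set ℕ+) (hdisj : Disjoint V W) (k : ℕ) (hk : 0 < k)
    (a b : ℕ) (P : Set ℕ+)
    (hP : P ⊆ {x | x ∈ V ∧ rk V x % k = a} ∪ {x | x ∈ W ∧ rk W x % k = b}) :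
    upperDensity P ≤ 1 / k := by
  apply upperDensity_le_of_count P (1 / k) 2 (by positivity)
  intro n hn
  have hn' : (0 : ℝ) < n := by exact_mod_cast hn
  set sV := {x : ℕ+ | x ∈ V ∧ (x : ℕ) ≤ n}.ncard with hsV
  set sW := {x : ℕ+ | x ∈ W ∧ (x : ℕ) ≤ n}.ncard with hsW
  -- class counts
  have classBound : ∀ (A : Set ℕ+) (s r : ℕ), s = {x : ℕ+ | x ∈ A ∧ (x : ℕ) ≤ n}.ncard →
      {x : ℕ+ | (x ∈ A ∧ rk A x % k = r) ∧ (x : ℕ) ≤ n}.ncard ≤ s / k + 1 := by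
    intro A s r hs
    have finT : {t : ℕ | t % k = r ∧ t ≤ s}.Finite :=
      (Set.finite_Iic s).subset (fun t ht => ht.2)
    have h1 : {x : ℕ+ | (x ∈ A ∧ rk A x % k = r) ∧ (x : ℕ) ≤ n}.ncard ≤
        {t : ℕ | t % k = r ∧ t ≤ s}.ncard := by
      refine Set.ncard_le_ncard_of_injOn (rk A) ?_ ?_ finT
      · intro x hx
        simp only [Set.mem_setOf_eq] at hx ⊢
        refine ⟨hx.1.2, ?_⟩
        rw [hs]
        exact rk_le A hx.2
      · intro x hx y hy hxy
        exact rk_injOn A hx.1.1 hy.1.1 hxy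
    exact h1.trans (classCard k r s)
  have hVA := classBound V sV a rfl
  have hWB := classBound W sW b rfl
  -- total count
  have hsplit : {x : ℕ+ | x ∈ P ∧ (x : ℕ) ≤ n}.ncard ≤
      {x : ℕ+ | (x ∈ V ∧ rk V x % k = a) ∧ (x : ℕ) ≤ n}.ncard +
      {x : ℕ+ | (x ∈ W ∧ rk W x % k = b) ∧ (x : ℕ) ≤ n}.ncard := by
    have hsub : {x : ℕ+ | x ∈ P ∧ (x : ℕ) ≤ n} ⊆
        {x : ℕ+ | (x ∈ V ∧ rk V x % k = a) ∧ (x : ℕ) ≤ n} ∪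
        {x : ℕ+ | (x ∈ W ∧ rk W x % k = b) ∧ (x : ℕ) ≤ n} := by
      intro x hx
      rcases hP hx.1 with h | h
      · exact Or.inl ⟨h, hx.2⟩
      · exact Or.inr ⟨h, hx.2⟩
    calc {x : ℕ+ | x ∈ P ∧ (x : ℕ) ≤ n}.ncard
        ≤ ({x : ℕ+ | (x ∈ V ∧ rk V x % k = a) ∧ (x : ℕ) ≤ n} ∪
           {x : ℕ+ | (x ∈ W ∧ rk W x % k = b) ∧ (x : ℕ) ≤ n}).ncard :=
          Set.ncard_le_ncard hsub
            (Set.Finite.union ((pnatLeFinite n).subset (fun y hy => hy.2))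
              ((pnatLeFinite n).subset (fun y hy => hy.2)))
      _ ≤ _ := Set.ncard_union_le _ _
  have hVWn : sV + sW ≤ n := by
    have hdisj' : Disjoint {x : ℕ+ | x ∈ V ∧ (x : ℕ) ≤ n} {x : ℕ+ | x ∈ W ∧ (x : ℕ) ≤ n} := by
      rw [Set.disjoint_left]
      intro x hx hx'
      exact Set.disjoint_left.mp hdisj hx.1 hx'.1
    have hfV : {x : ℕ+ | x ∈ V ∧ (x : ℕ) ≤ n}.Finite := (pnatLeFinite n).subset (fun y hy => hy.2)
    have hfW : {x : ℕ+ | x ∈ W ∧ (x : ℕ) ≤ n}.Finite := (pnatLeFinite n).subset (fun y hy => hy.2)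
    calc sV + sW = ({x : ℕ+ | x ∈ V ∧ (x : ℕ) ≤ n} ∪ {x : ℕ+ | x ∈ W ∧ (x : ℕ) ≤ n}).ncard :=
          (Set.ncard_union_eq hdisj' hfV hfW).symm
      _ ≤ {a : ℕ+ | (a : ℕ) ≤ n}.ncard := by
          apply Set.ncard_le_ncard _ (pnatLeFinite n)
          rintro x (hx | hx) <;> exact hx.2
      _ ≤ n := cardPnatLe n
  have hnat : {x : ℕ+ | x ∈ P ∧ (x : ℕ) ≤ n}.ncard ≤ n / k + 2 := by
    have hdd : sV / k + sW / k ≤ n / k := by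
      calc sV / k + sW / k ≤ (sV + sW) / k := Nat.add_div_le_add_div sV sW k
        _ ≤ n / k := Nat.div_le_div_right hVWn
    omega
  -- real arithmetic
  have hk' : (0 : ℝ) < k := by exact_mod_cast hk
  calc ({x : ℕ+ | x ∈ P ∧ (x : ℕ) ≤ n}.ncard : ℝ) / n
      ≤ (((n / k : ℕ) : ℝ) + 2) / n := by
        gcongr
        · exact_mod_cast hnat
    _ ≤ ((n : ℝ) / k + 2) / n := by gcongr; exact Nat.cast_div_le
    _ = 1 / k + 2 / n := by field_simp

open Classical in
/-- The colouring: an edge between `x ∈ V` and `y ∈ W` gets colour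
`(rk V x + rk W y) % k`. -/
noncomputable def gfun (V W : Set ℕ+) (k : ℕ) (hk : 0 < k) (x y : ℕ+) : Fin k :=
  if x ∈ V ∧ y ∈ W then ⟨(rk V x + rk W y) % k, Nat.mod_lt _ hk⟩
  else if x ∈ W ∧ y ∈ V then ⟨(rk V y + rk W x) % k, Nat.mod_lt _ hk⟩
  else ⟨0, hk⟩

lemma gfun_symm (V W : Set ℕ+) (k : ℕ) (hk : 0 < k) (hdisj : Disjoint V W) :
    ∀ x y, gfun V W k hk x y = gfun V W k hk y x := by
  have hd : ∀ z : ℕ+, z ∈ V → z ∈ W → False :=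
    fun z hv hw => Set.disjoint_left.mp hdisj hv hw
  intro x y
  unfold gfun
  split_ifs with h1 h2 h3 h4 h5 h6 h7 <;> first
    | rfl
    | (exfalso; tauto)

lemma gfun_VW (V W : Set ℕ+) (k : ℕ) (hk : 0 < k) {v w : ℕ+} (hv : v ∈ V) (hw : w ∈ W)
    (hdisj : Disjoint V W) :
    gfun V W k hk v w = ⟨(rk V v + rk W w) % k, Nat.mod_lt _ hk⟩ := by
  unfold gfun
  rw [if_pos ⟨hv, hw⟩]

/-- For every `k ≥ 1`, there is a `k`-edge-colouring of `K_{V,W}` in which every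
monochromatic path has upper density at most `1/k`. -/
theorem stmt_3 (V W : Set ℕ+) (hV : V.Infinite) (hW : W.Infinite)
    (hdisj : Disjoint V W) (hunion : V ∪ W = Set.univ) (k : ℕ) (hk : 0 < k) :
    ∃ c : Sym2 ℕ+ → Fin k, ∀ (i : Fin k) (P : Set ℕ+),
      IsMonoPath (bipAdj V W) c i P → upperDensity P ≤ 1 / k := by
  classical
  have hd : ∀ z : ℕ+, z ∈ V → z ∈ W → False :=
    fun z hv hw => Set.disjoint_left.mp hdisj hv hw
  set c : Sym2 ℕ+ → Fin k := Sym2.lift ⟨gfun V W k hk, gfun_symm V W k hk hdisj⟩ with hcdef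
  have hcvw : ∀ v w : ℕ+, v ∈ V → w ∈ W →
      c s(v, w) = ⟨(rk V v + rk W w) % k, Nat.mod_lt _ hk⟩ := by
    intro v w hv hw
    rw [hcdef]
    rw [Sym2.lift_mk]
    exact gfun_VW V W k hk hv hw hdisj
  have hcwv : ∀ v w : ℕ+, v ∈ V → w ∈ W →
      c s(w, v) = ⟨(rk V v + rk W w) % k, Nat.mod_lt _ hk⟩ := by
    intro v w hv hw
    rw [Sym2.eq_swap]
    exact hcvw v w hv hw
  refine ⟨c, ?_⟩
  intro i P hP
  rcases hP with ⟨n, f, hinj, hedge, hPr⟩ | ⟨f, hinj, hedge, hPr⟩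
  · -- finite path
    exact upperDensity_finite P (hPr ▸ Set.finite_range f) (1 / k) (by positivity)
  · -- infinite path
    -- the confinement step
    have step : ∀ a b : ℕ, (a + b) % k = (i : ℕ) → b < k → a < k →
        ∀ x y : ℕ+, bipAdj V W x y → c s(x, y) = i →
        ((x ∈ V ∧ rk V x % k = a) ∨ (x ∈ W ∧ rk W x % k = b)) →
        ((y ∈ V ∧ rk V y % k = a) ∨ (y ∈ W ∧ rk W y % k = b)) := by
      intro a b hab hb ha x y hadj hcol hx
      rcases hx with ⟨hxV, hxa⟩ | ⟨hxW, hxb⟩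
      · have hyW : y ∈ W := by
          rcases hadj with ⟨_, h⟩ | ⟨h, _⟩
          · exact h
          · exact absurd h (fun h' => hd x hxV h')
        refine Or.inr ⟨hyW, ?_⟩
        have hval : (rk V x + rk W y) % k = (i : ℕ) := by
          have h1 := (hcvw x y hxV hyW).symm.trans hcol
          exact congrArg Fin.val h1
        have h1 : (a + rk W y % k) % k = (a + b) % k := by
          conv_lhs => rw [← hxa]
          rw [← Nat.add_mod, hval]
          exact hab.symm
        have h2 : rk W y % k ≡ b [MOD k] := Nat.ModEq.add_left_cancel' a h1
        have h3 : rk W y % k % k = b % k := h2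
        rwa [Nat.mod_mod_of_dvd _ dvd_rfl, Nat.mod_eq_of_lt hb] at h3
      · have hyV : y ∈ V := by
          rcases hadj with ⟨h, _⟩ | ⟨_, h⟩
          · exact absurd h (fun h' => hd x h' hxW)
          · exact h
        refine Or.inl ⟨hyV, ?_⟩
        have hval : (rk V y + rk W x) % k = (i : ℕ) := by
          have h1 := (hcwv y x hyV hxW).symm.trans hcol
          exact congrArg Fin.val h1
        have h1 : (rk V y % k + b) % k = (a + b) % k := by
          conv_lhs => rw [← hxb]
          rw [← Nat.add_mod, hval]
          exact hab.symm
        have h2 : rk V y % k ≡ a [MOD k] := Nat.ModEq.add_right_cancel' b h1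
        have h3 : rk V y % k % k = a % k := h2
        rwa [Nat.mod_mod_of_dvd _ dvd_rfl, Nat.mod_eq_of_lt ha] at h3
    -- choose a, b from the first edge
    obtain ⟨a, b, hab, ha, hb, hbase⟩ :
        ∃ a b : ℕ, (a + b) % k = (i : ℕ) ∧ a < k ∧ b < k ∧
          ((f 0 ∈ V ∧ rk V (f 0) % k = a) ∨ (f 0 ∈ W ∧ rk W (f 0) % k = b)) := by
      rcases (hedge 0).1 with ⟨h0V, h1W⟩ | ⟨h0W, h1V⟩
      · refine ⟨rk V (f 0) % k, rk W (f 1) % k, ?_, Nat.mod_lt _ hk, Nat.mod_lt _ hk,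
          Or.inl ⟨h0V, rfl⟩⟩
        have hval : (rk V (f 0) + rk W (f 1)) % k = (i : ℕ) := by
          have h1 := (hcvw (f 0) (f 1) h0V h1W).symm.trans (hedge 0).2
          exact congrArg Fin.val h1
        rw [← Nat.add_mod, hval]
      · refine ⟨rk V (f 1) % k, rk W (f 0) % k, ?_, Nat.mod_lt _ hk, Nat.mod_lt _ hk,
          Or.inr ⟨h0W, rfl⟩⟩
        have hval : (rk V (f 1) + rk W (f 0)) % k = (i : ℕ) := by
          have h1 := (hcwv (f 1) (f 0) h1V h0W).symm.trans (hedge 0).2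
          exact congrArg Fin.val h1
        rw [← Nat.add_mod, hval]
    have hall : ∀ j : ℕ,
        (f j ∈ V ∧ rk V (f j) % k = a) ∨ (f j ∈ W ∧ rk W (f j) % k = b) := by
      intro j
      induction j with
      | zero => exact hbase
      | succ j ih => exact step a b hab hb ha (f j) (f (j + 1)) (hedge j).1 (hedge j).2 ih
    apply density_main V W hdisj k hk a b P
    rw [hPr]
    rintro x ⟨j, rfl⟩
    rcases hall j with h | h
    · exact Or.inl h
    · exact Or.inr h
end

section
/- Let V and W be infinite disjoint sets with V ∪ W = ℕ. In any 2-edge-colouring of the complete bipartite graph K_{V,W}, there exists a monochromatic path P with d̄(P) ≥ 1/2. -/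
open Filter

namespace StmtAux


/-- counting function -/
noncomputable def dfun (A : Set ℕ+) (n : ℕ) : ℝ :=
  (({a : ℕ+ | a ∈ A ∧ (a : ℕ) ≤ n}).ncard : ℝ) / n

lemma upperDensity_eq (A : Set ℕ+) : upperDensity A = limsup (dfun A) atTop := rfl

lemma cut_finite (A : Set ℕ+) (n : ℕ) : {a : ℕ+ | a ∈ A ∧ (a : ℕ) ≤ n}.Finite := by
  have h1 : {a : ℕ+ | a ∈ A ∧ (a : ℕ) ≤ n} ⊆ (fun (a : ℕ+) => (a : ℕ)) ⁻¹' (Set.Iic n) := by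
    intro a ha; exact ha.2
  refine Set.Finite.subset (Set.Finite.preimage ?_ (Set.finite_Iic n)) h1
  intro a _ b _ h
  exact PNat.coe_injective h

lemma cut_card_le (A : Set ℕ+) (n : ℕ) : ({a : ℕ+ | a ∈ A ∧ (a : ℕ) ≤ n}).ncard ≤ n := by
  have h1 : ({a : ℕ+ | a ∈ A ∧ (a : ℕ) ≤ n}).ncard
      = ((fun (a : ℕ+) => (a : ℕ)) '' {a : ℕ+ | a ∈ A ∧ (a : ℕ) ≤ n}).ncard :=
    (Set.ncard_image_of_injective _ PNat.coe_injective).symm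
  rw [h1]
  have h2 : (fun (a : ℕ+) => (a : ℕ)) '' {a : ℕ+ | a ∈ A ∧ (a : ℕ) ≤ n}
      ⊆ (Finset.Icc 1 n : Finset ℕ) := by
    rintro m ⟨a, ⟨_, hle⟩, rfl⟩
    simp only [Finset.coe_Icc, Set.mem_Icc]
    exact ⟨a.one_le, hle⟩
  calc ((fun (a : ℕ+) => (a : ℕ)) '' {a : ℕ+ | a ∈ A ∧ (a : ℕ) ≤ n}).ncard
      ≤ ((Finset.Icc 1 n : Finset ℕ) : Set ℕ).ncard :=
        Set.ncard_le_ncard h2 (Finset.finite_toSet _)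
    _ = n := by rw [Set.ncard_coe_finset, Nat.card_Icc]; omega

lemma dfun_nonneg (A : Set ℕ+) (n : ℕ) : 0 ≤ dfun A n := by
  unfold dfun; positivity

lemma dfun_le_one (A : Set ℕ+) (n : ℕ) : dfun A n ≤ 1 := by
  unfold dfun
  rcases Nat.eq_zero_or_pos n with h | h
  · simp [h]
  · rw [div_le_one (by exact_mod_cast h)]
    exact_mod_cast cut_card_le A n

lemma isBounded_dfun (A : Set ℕ+) : IsBoundedUnder (· ≤ ·) atTop (dfun A) :=
  Filter.isBoundedUnder_of ⟨1, dfun_le_one A⟩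

lemma isCobounded_dfun (A : Set ℕ+) : IsCoboundedUnder (· ≤ ·) atTop (dfun A) :=
  IsBoundedUnder.isCoboundedUnder_le (Filter.isBoundedUnder_of ⟨0, dfun_nonneg A⟩)

lemma upperDensity_mono {A B : Set ℕ+} (h : A ⊆ B) : upperDensity A ≤ upperDensity B := by
  rw [upperDensity_eq, upperDensity_eq]
  refine limsup_le_limsup (Filter.Eventually.of_forall ?_) (isCobounded_dfun A) (isBounded_dfun B)
  intro n
  unfold dfun
  rcases Nat.eq_zero_or_pos n with h0 | h0
  · simp [h0]
  · have hsub : {a : ℕ+ | a ∈ A ∧ (a : ℕ) ≤ n} ⊆ {a : ℕ+ | a ∈ B ∧ (a : ℕ) ≤ n} :=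
      fun a ha => ⟨h ha.1, ha.2⟩
    have hcard := Set.ncard_le_ncard hsub (cut_finite B n)
    have hcardR : (({a : ℕ+ | a ∈ A ∧ (a : ℕ) ≤ n}).ncard : ℝ)
        ≤ (({a : ℕ+ | a ∈ B ∧ (a : ℕ) ≤ n}).ncard : ℝ) := by exact_mod_cast hcard
    have hnR : (0:ℝ) < n := by exact_mod_cast h0
    exact (div_le_div_iff_of_pos_right hnR).mpr hcardR

lemma upperDensity_ge_finite {A : Set ℕ+} (h : (1:ℝ)/2 ≤ upperDensity A) : A.Infinite := by
  by_contra hfin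
  rw [Set.not_infinite] at hfin
  have hK : ∀ n, ({a : ℕ+ | a ∈ A ∧ (a : ℕ) ≤ n}).ncard ≤ A.ncard := by
    intro n
    exact Set.ncard_le_ncard (fun a ha => ha.1) hfin
  have hbound : ∀ n : ℕ, 4 * A.ncard ≤ n → dfun A n ≤ 1/4 := by
    intro n hn
    unfold dfun
    rcases Nat.eq_zero_or_pos n with h0 | h0
    · simp [h0]
    · rw [div_le_div_iff₀ (by exact_mod_cast h0) (by norm_num)]
      have := hK n
      have : (({a : ℕ+ | a ∈ A ∧ (a : ℕ) ≤ n}).ncard : ℝ) ≤ A.ncard := by exact_mod_cast this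
      have h4 : (4:ℝ) * A.ncard ≤ n := by exact_mod_cast hn
      linarith
  have hlim : limsup (dfun A) atTop ≤ 1/4 := by
    refine limsup_le_of_le (isCobounded_dfun A) ?_
    filter_upwards [eventually_ge_atTop (4 * A.ncard)] with n hn
    exact hbound n hn
  rw [upperDensity_eq] at h
  linarith

/-- If all but finitely many positive integers lie in `S ∪ T`, then one of them has
upper density at least 1/2. -/
lemma density_dichotomy (S T : Set ℕ+) (F : Finset ℕ+)
    (hcov : ∀ a : ℕ+, a ∉ F → a ∈ S ∨ a ∈ T) :
    (1:ℝ)/2 ≤ upperDensity S ∨ (1:ℝ)/2 ≤ upperDensity T := by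
  by_contra hcon
  push_neg at hcon
  obtain ⟨hS, hT⟩ := hcon
  rw [upperDensity_eq] at hS hT
  set a := limsup (dfun S) atTop with ha
  set b := limsup (dfun T) atTop with hb
  have hab : a + b < 1 := by linarith
  set θ : ℝ := (1 - a - b)/3 with hθ
  have hθpos : 0 < θ := by simp only [hθ]; linarith
  have hSe : ∀ᶠ n in atTop, dfun S n < a + θ :=
    eventually_lt_of_limsup_lt (by linarith) (isBounded_dfun S)
  have hTe : ∀ᶠ n in atTop, dfun T n < b + θ :=
    eventually_lt_of_limsup_lt (by linarith) (isBounded_dfun T)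
  -- counting lower bound
  have hcount : ∀ n : ℕ, (n : ℝ) - F.card ≤
      (({a : ℕ+ | a ∈ S ∧ (a : ℕ) ≤ n}).ncard : ℝ) + ({a : ℕ+ | a ∈ T ∧ (a : ℕ) ≤ n}).ncard := by
    intro n
    have hsub : {a : ℕ+ | (a : ℕ) ≤ n} ⊆
        {a : ℕ+ | a ∈ S ∧ (a : ℕ) ≤ n} ∪ {a : ℕ+ | a ∈ T ∧ (a : ℕ) ≤ n} ∪ (F : Set ℕ+) := by
      intro x hx
      by_cases hxF : x ∈ F
      · exact Or.inr hxF
      · rcases hcov x hxF with h | h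
        · exact Or.inl (Or.inl ⟨h, hx⟩)
        · exact Or.inl (Or.inr ⟨h, hx⟩)
    have hn : ({a : ℕ+ | (a : ℕ) ≤ n}).ncard = n := by
      have h1 : ({a : ℕ+ | (a : ℕ) ≤ n}).ncard
          = ((fun (a : ℕ+) => (a : ℕ)) '' {a : ℕ+ | (a : ℕ) ≤ n}).ncard :=
        (Set.ncard_image_of_injective _ PNat.coe_injective).symm
      have h2 : (fun (a : ℕ+) => (a : ℕ)) '' {a : ℕ+ | (a : ℕ) ≤ n}
          = ((Finset.Icc 1 n : Finset ℕ) : Set ℕ) := by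
        ext m
        simp only [Set.mem_image, Set.mem_setOf_eq, Finset.coe_Icc, Set.mem_Icc]
        constructor
        · rintro ⟨x, hx, rfl⟩; exact ⟨x.one_le, hx⟩
        · rintro ⟨h1m, h2m⟩
          exact ⟨⟨m, h1m⟩, h2m, rfl⟩
      rw [h1, h2, Set.ncard_coe_finset, Nat.card_Icc]
      omega
    have hle : n ≤ ({a : ℕ+ | a ∈ S ∧ (a : ℕ) ≤ n}).ncard
        + ({a : ℕ+ | a ∈ T ∧ (a : ℕ) ≤ n}).ncard + F.card := by
      calc n = ({a : ℕ+ | (a : ℕ) ≤ n}).ncard := hn.symm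
        _ ≤ ({a : ℕ+ | a ∈ S ∧ (a : ℕ) ≤ n} ∪ {a : ℕ+ | a ∈ T ∧ (a : ℕ) ≤ n}
              ∪ (F : Set ℕ+)).ncard := by
            refine Set.ncard_le_ncard hsub ?_
            exact (((cut_finite S n).union (cut_finite T n)).union (F.finite_toSet))
        _ ≤ ({a : ℕ+ | a ∈ S ∧ (a : ℕ) ≤ n} ∪ {a : ℕ+ | a ∈ T ∧ (a : ℕ) ≤ n}).ncard
              + ((F : Set ℕ+)).ncard := Set.ncard_union_le _ _
        _ ≤ ({a : ℕ+ | a ∈ S ∧ (a : ℕ) ≤ n}).ncard + ({a : ℕ+ | a ∈ T ∧ (a : ℕ) ≤ n}).ncard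
              + F.card := by
            have := Set.ncard_union_le {a : ℕ+ | a ∈ S ∧ (a : ℕ) ≤ n}
              {a : ℕ+ | a ∈ T ∧ (a : ℕ) ≤ n}
            rw [Set.ncard_coe_finset]
            omega
    have := (Nat.cast_le (α := ℝ)).mpr hle
    push_cast at this
    linarith
  -- pick a large n
  have hbig : ∀ᶠ n : ℕ in atTop, False := by
    filter_upwards [hSe, hTe, eventually_ge_atTop (max 1 (Nat.ceil ((F.card : ℝ)/θ) + 1))]
      with n h1 h2 h3
    have hn1 : 1 ≤ n := le_trans (le_max_left _ _) h3
    have hnpos : (0:ℝ) < n := by exact_mod_cast hn1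
    have hnθ : (F.card : ℝ) / θ < n := by
      have : (Nat.ceil ((F.card : ℝ)/θ) + 1 : ℕ) ≤ n := le_trans (le_max_right _ _) h3
      have h4 : ((F.card : ℝ)/θ) ≤ Nat.ceil ((F.card : ℝ)/θ) := Nat.le_ceil _
      have h5 : (Nat.ceil ((F.card : ℝ)/θ) : ℝ) + 1 ≤ n := by exact_mod_cast this
      linarith
    have hFn : (F.card : ℝ) < θ * n := by
      rw [div_lt_iff₀ hθpos] at hnθ
      linarith [hnθ]
    have hsum : 1 - θ < dfun S n + dfun T n := by
      unfold dfun
      rw [← add_div, lt_div_iff₀ hnpos]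
      have := hcount n
      nlinarith
    have : dfun S n + dfun T n < a + b + 2*θ := by linarith
    have : (1:ℝ) - θ < a + b + 2*θ := by linarith
    simp only [hθ] at this
    linarith
  obtain ⟨n, hn⟩ := hbig.exists
  exact hn


variable (V W : Set ℕ+) (c : Sym2 ℕ+ → Fin 2)

def EdgeC (i : Fin 2) (x y : ℕ+) : Prop := bipAdj V W x y ∧ c s(x, y) = i

def Robust (i : Fin 2) (S : Set ℕ+) : Prop :=
  ∀ x ∈ S, ∀ y ∈ S, x ≠ y → ∀ F : Finset ℕ+,
    ∃ m : List ℕ+, List.Chain' (EdgeC V W c i) (x :: (m ++ [y])) ∧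
      (x :: (m ++ [y])).Nodup ∧ ∀ z ∈ m, z ∉ F

structure PSt (i : Fin 2) (S : Set ℕ+) where
  l : List ℕ+
  e : ℕ+
  hl : l.getLast? = some e
  nd : l.Nodup
  ch : l.Chain' (EdgeC V W c i)
  he : e ∈ S

variable {V W c}

lemma PSt.extend {i : Fin 2} {S : Set ℕ+} (hR : Robust V W c i S)
    (st : PSt V W c i S) (t : ℕ+) (ht : t ∈ S) :
    ∃ st' : PSt V W c i S, st.l <+: st'.l ∧ t ∈ st'.l := by
  by_cases hmem : t ∈ st.l
  · exact ⟨st, List.prefix_refl _, hmem⟩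
  · have he_mem : st.e ∈ st.l := by
      obtain ⟨hne, heq⟩ := List.mem_getLast?_eq_getLast (x := st.e) (by rw [st.hl]; rfl)
      rw [heq]; exact List.getLast_mem hne
    have hne : st.e ≠ t := fun h => hmem (h ▸ he_mem)
    obtain ⟨m, hch, hnd, hF⟩ := hR st.e st.he t ht hne (st.l.toFinset.erase st.e)
    have h1 := List.nodup_cons.mp hnd
    refine ⟨⟨st.l ++ (m ++ [t]), t, ?_, ?_, ?_, ht⟩, List.prefix_append _ _, by simp⟩
    · rw [List.getLast?_append_of_ne_nil _ (by simp), List.getLast?_concat]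
    · rw [List.nodup_append']
      refine ⟨st.nd, h1.2, ?_⟩
      intro a ha ha2
      rcases List.mem_append.mp ha2 with ham | hat
      · by_cases hae : a = st.e
        · exact h1.1 (List.mem_append.mpr (Or.inl (hae ▸ ham)))
        · exact (hF a ham) (Finset.mem_erase.mpr ⟨hae, List.mem_toFinset.mpr ha⟩)
      · rw [List.mem_singleton] at hat; exact hmem (hat ▸ ha)
    · simp only [List.Chain']
      rw [List.isChain_append]
      obtain ⟨hhead, htail⟩ := List.isChain_cons.mp hch
      refine ⟨st.ch, htail, ?_⟩
      intro x hx y hy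
      rw [st.hl, Option.mem_def, Option.some_inj] at hx
      exact hx ▸ hhead y hy

lemma robust_cover {i : Fin 2} {S : Set ℕ+} (hS : S.Infinite) (hR : Robust V W c i S) :
    ∃ f : ℕ → ℕ+, Function.Injective f ∧ (∀ j, EdgeC V W c i (f j) (f (j + 1))) ∧
      S ⊆ Set.range f := by
  obtain ⟨g, hg⟩ := (Set.to_countable S).exists_eq_range hS.nonempty
  have hgS : ∀ k, g k ∈ S := fun k => hg ▸ Set.mem_range_self k
  let st0 : PSt V W c i S :=
    ⟨[g 0], g 0, rfl, List.nodup_singleton _, List.isChain_singleton _, hgS 0⟩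
  have hstep : ∀ st : PSt V W c i S, ∀ k : ℕ,
      ∃ st' : PSt V W c i S, st.l <+: st'.l ∧ g k ∈ st'.l :=
    fun st k => st.extend hR (g k) (hgS k)
  choose ext hpre hmem using hstep
  let L : ℕ → PSt V W c i S := fun n => Nat.rec st0 (fun k s => ext s (k + 1)) n
  have hLmem : ∀ k, g k ∈ (L k).l := by
    intro k
    cases k with
    | zero => simp [L, st0]
    | succ k => exact hmem _ _
  have hLsucc : ∀ k, (L k).l <+: (L (k + 1)).l := fun k => hpre _ _
  have hmono : ∀ {k K : ℕ}, k ≤ K → (L k).l <+: (L K).l := by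
    intro k K h
    induction h with
    | refl => exact List.prefix_refl _
    | step _ ih => exact ih.trans (hLsucc _)
  have hlen : ∀ N : ℕ, ∃ k, N < (L k).l.length := by
    intro N
    obtain ⟨Fs, hFsub, hFcard⟩ := hS.exists_subset_card_eq (N + 1)
    have hidx : ∀ a ∈ Fs, ∃ k, g k = a := by
      intro a ha
      have := hFsub ha
      rw [hg] at this
      exact this
    choose idx hidxv using hidx
    let K := Fs.attach.sup fun a => idx a.1 a.2
    refine ⟨K, ?_⟩
    have hsub : Fs ⊆ (L K).l.toFinset := by
      intro a ha
      rw [List.mem_toFinset]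
      have h1 : idx a ha ≤ K :=
        Finset.le_sup (f := fun x : {x // x ∈ Fs} => idx x.1 x.2) (Finset.mem_attach Fs ⟨a, ha⟩)
      have h2 : g (idx a ha) ∈ (L (idx a ha)).l := hLmem _
      have := (hmono h1).sublist.subset h2
      rwa [hidxv a ha] at this
    have := Finset.card_le_card hsub
    rw [hFcard, List.toFinset_card_of_nodup (L K).nd] at this
    omega
  have hex : ∀ n : ℕ, ∃ k, n < (L k).l.length := hlen
  let ix : ℕ → ℕ := fun n => Nat.find (hex n)
  have hix : ∀ n, n < (L (ix n)).l.length := fun n => Nat.find_spec (hex n)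
  let f : ℕ → ℕ+ := fun n => (L (ix n)).l[n]'(hix n)
  have hval : ∀ (n k : ℕ) (h : n < (L k).l.length), (L k).l[n]'h = f n := by
    intro n k h
    rcases le_total k (ix n) with hk | hk
    · exact (hmono hk).getElem h
    · exact ((hmono hk).getElem (hix n)).symm
  refine ⟨f, ?_, ?_, ?_⟩
  · intro m n hmn
    set K := max (ix m) (ix n) with hK
    have hm : m < (L K).l.length :=
      lt_of_lt_of_le (hix m) (hmono (le_max_left _ _)).length_le
    have hn : n < (L K).l.length :=
      lt_of_lt_of_le (hix n) (hmono (le_max_right _ _)).length_le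
    have h1 : (L K).l[m]'hm = (L K).l[n]'hn := by
      rw [hval m K hm, hval n K hn, hmn]
    exact ((L K).nd.getElem_inj_iff).mp h1
  · intro j
    have hj1 : j + 1 < (L (ix (j + 1))).l.length := hix (j + 1)
    have hj : j < (L (ix (j + 1))).l.length := by omega
    have := List.isChain_iff_getElem.mp (L (ix (j + 1))).ch j (by omega)
    rwa [hval j _ _, hval (j + 1) _ _] at this
  · intro a ha
    rw [hg] at ha
    obtain ⟨k, rfl⟩ := ha
    obtain ⟨⟨j, hjlen⟩, hjval⟩ := List.mem_iff_get.mp (hLmem k)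
    rw [List.get_eq_getElem] at hjval
    exact ⟨j, by rw [← hjval]; exact (hval j k hjlen).symm⟩


lemma EdgeC_symm {i : Fin 2} {x y : ℕ+} (h : EdgeC V W c i x y) : EdgeC V W c i y x := by
  obtain ⟨hadj, hcol⟩ := h
  refine ⟨?_, ?_⟩
  · rcases hadj with h | h
    · exact Or.inr ⟨h.2, h.1⟩
    · exact Or.inl ⟨h.2, h.1⟩
  · rwa [Sym2.eq_swap]

lemma rev_path {i : Fin 2} {x y : ℕ+} {m : List ℕ+}
    (h1 : List.Chain' (EdgeC V W c i) (x :: (m ++ [y])))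
    (h2 : (x :: (m ++ [y])).Nodup) :
    List.Chain' (EdgeC V W c i) (y :: (m.reverse ++ [x])) ∧
      (y :: (m.reverse ++ [x])).Nodup := by
  have hrev : (y :: (m.reverse ++ [x])) = (x :: (m ++ [y])).reverse := by simp
  rw [hrev]
  constructor
  · simp only [List.Chain']
    rw [List.isChain_reverse]
    exact List.IsChain.imp (fun a b hab => EdgeC_symm hab) h1
  · exact List.nodup_reverse.mpr h2

lemma chain3 {i : Fin 2} {x w y : ℕ+} (h1 : EdgeC V W c i x w) (h2 : EdgeC V W c i w y) :
    List.Chain' (EdgeC V W c i) [x, w, y] :=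
  List.isChain_cons_cons.mpr ⟨h1, List.isChain_cons_cons.mpr ⟨h2, List.isChain_singleton _⟩⟩

lemma chain4 {i : Fin 2} {x w v y : ℕ+} (h1 : EdgeC V W c i x w) (h2 : EdgeC V W c i w v)
    (h3 : EdgeC V W c i v y) : List.Chain' (EdgeC V W c i) [x, w, v, y] :=
  List.isChain_cons_cons.mpr ⟨h1, chain3 h2 h3⟩

lemma nodup3 {x w y : ℕ+} (h1 : x ≠ w) (h2 : x ≠ y) (h3 : w ≠ y) :
    ([x, w, y] : List ℕ+).Nodup := by
  simp [List.nodup_cons, h1, h2, h3]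

lemma nodup4 {x w v y : ℕ+} (h1 : x ≠ w) (h2 : x ≠ v) (h3 : x ≠ y) (h4 : w ≠ v) (h5 : w ≠ y)
    (h6 : v ≠ y) : ([x, w, v, y] : List ℕ+).Nodup := by
  simp [List.nodup_cons, h1, h2, h3, h4, h5, h6]

lemma exists_ultra (X : Set ℕ+) (hX : X.Infinite) :
    ∃ P : Ultrafilter ℕ+, X ∈ P ∧ ∀ A ∈ P, A.Infinite := by
  have hne : NeBot (Filter.cofinite ⊓ 𝓟 X) := by
    rw [Filter.inf_principal_neBot_iff]
    intro U hU
    by_contra hcon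
    rw [Set.not_nonempty_iff_eq_empty] at hcon
    have hsub : X ⊆ Uᶜ := by
      intro x hx
      by_contra hxU
      rw [Set.notMem_compl_iff] at hxU
      have : x ∈ U ∩ X := ⟨hxU, hx⟩
      rw [hcon] at this
      exact this
    rw [Filter.mem_cofinite] at hU
    exact hX (Set.Finite.subset hU hsub)
  obtain ⟨U, hU⟩ := Ultrafilter.exists_le (Filter.cofinite ⊓ 𝓟 X)
  refine ⟨U, ?_, ?_⟩
  · exact le_principal_iff.mp (le_trans hU inf_le_right)
  · intro A hA
    by_contra hfin
    rw [Set.not_infinite] at hfin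
    have hAc : Aᶜ ∈ U := by
      apply le_trans hU inf_le_left
      rw [Filter.mem_cofinite, compl_compl]
      exact hfin
    have := Filter.inter_mem hA hAc
    rw [Set.inter_compl_self] at this
    exact Filter.empty_notMem (U : Filter ℕ+) this


lemma core (V W : Set ℕ+) (c : Sym2 ℕ+ → Fin 2) (hV : V.Infinite) (hW : W.Infinite)
    (hdisj : Disjoint V W) (hunion : V ∪ W = Set.univ) (r b : Fin 2)
    (hrb : ∀ j : Fin 2, j = r ∨ j = b)
    (P : Ultrafilter ℕ+) (hPW : W ∈ P) (hPinf : ∀ A ∈ P, A.Infinite)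
    (hAr : {v : ℕ+ | v ∈ V ∧ {w : ℕ+ | w ∈ W ∧ c s(v, w) = r} ∈ P}.Infinite) :
    ∃ (i : Fin 2) (Pp : Set ℕ+), IsMonoPath (bipAdj V W) c i Pp ∧ 1 / 2 ≤ upperDensity Pp := by
  classical
  obtain ⟨Q, hQA0, hQinf⟩ := exists_ultra _ hAr
  set NWs : Fin 2 → ℕ+ → Set ℕ+ := fun i v => {w : ℕ+ | w ∈ W ∧ c s(v, w) = i} with hNWs
  set As : Fin 2 → Set ℕ+ := fun i => {v : ℕ+ | v ∈ V ∧ NWs i v ∈ P} with hAs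
  set NVs : Fin 2 → ℕ+ → Set ℕ+ := fun i w => {v : ℕ+ | v ∈ V ∧ c s(v, w) = i} with hNVs
  set Bs : Fin 2 → Set ℕ+ := fun i => {w : ℕ+ | w ∈ W ∧ NVs i w ∈ Q} with hBs
  have hQA : As r ∈ Q := hQA0
  have hQV : V ∈ Q := Filter.mem_of_superset hQA (fun v hv => hv.1)
  have hsides : ∀ x : ℕ+, x ∈ V ∨ x ∈ W := by
    intro x
    have : x ∈ V ∪ W := by rw [hunion]; trivial
    exact this
  have hVWd : ∀ {x : ℕ+}, x ∈ V → x ∈ W → False :=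
    fun hx hw => Set.disjoint_left.mp hdisj hx hw
  have hneVW : ∀ {x y : ℕ+}, x ∈ V → y ∈ W → x ≠ y := by
    intro x y hx hy h
    subst h
    exact hVWd hx hy
  have csymm : ∀ x y : ℕ+, c s(x, y) = c s(y, x) := fun x y => by rw [Sym2.eq_swap]
  have eVW : ∀ {i : Fin 2} {v w : ℕ+}, v ∈ V → w ∈ W → c s(v, w) = i → EdgeC V W c i v w :=
    fun hv hw hc => ⟨Or.inl ⟨hv, hw⟩, hc⟩
  have eWV : ∀ {i : Fin 2} {v w : ℕ+}, v ∈ V → w ∈ W → c s(v, w) = i → EdgeC V W c i w v :=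
    fun hv hw hc => ⟨Or.inr ⟨hw, hv⟩, (csymm _ _).trans hc⟩
  have hAcov : ∀ v ∈ V, v ∈ As r ∨ v ∈ As b := by
    intro v hv
    have hun : NWs r v ∪ NWs b v ∈ P := by
      apply Filter.mem_of_superset hPW
      intro w hw
      rcases hrb (c s(v, w)) with h | h
      · exact Or.inl ⟨hw, h⟩
      · exact Or.inr ⟨hw, h⟩
    rcases (Ultrafilter.union_mem_iff (f := P)).mp hun with h | h
    · exact Or.inl ⟨hv, h⟩
    · exact Or.inr ⟨hv, h⟩
  have hBcov : ∀ w ∈ W, w ∈ Bs r ∨ w ∈ Bs b := by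
    intro w hw
    have hun : NVs r w ∪ NVs b w ∈ Q := by
      apply Filter.mem_of_superset hQV
      intro v hv
      rcases hrb (c s(v, w)) with h | h
      · exact Or.inl ⟨hv, h⟩
      · exact Or.inr ⟨hv, h⟩
    rcases (Ultrafilter.union_mem_iff (f := Q)).mp hun with h | h
    · exact Or.inl ⟨hw, h⟩
    · exact Or.inr ⟨hw, h⟩
  have pickP : ∀ (X : Set ℕ+), X ∈ P → ∀ G : Finset ℕ+, ∃ z, z ∈ X ∧ z ∉ G := by
    intro X hX G
    obtain ⟨z, hz1, hz2⟩ := (hPinf X hX).exists_notMem_finset G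
    exact ⟨z, hz1, hz2⟩
  have pickQ : ∀ (X : Set ℕ+), X ∈ Q → ∀ G : Finset ℕ+, ∃ z, z ∈ X ∧ z ∉ G := by
    intro X hX G
    obtain ⟨z, hz1, hz2⟩ := (hQinf X hX).exists_notMem_finset G
    exact ⟨z, hz1, hz2⟩
  -- robustness of S1 = As r ∪ Bs r in colour r
  have hS1cross : ∀ x ∈ As r, ∀ y ∈ Bs r, ∀ F : Finset ℕ+,
      ∃ m : List ℕ+, List.Chain' (EdgeC V W c r) (x :: (m ++ [y])) ∧
        (x :: (m ++ [y])).Nodup ∧ ∀ z ∈ m, z ∉ F := by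
    intro x hx y hy F
    obtain ⟨v1, hv1, hv1G⟩ := pickQ (NVs r y ∩ As r) (Filter.inter_mem hy.2 hQA) (insert x F)
    obtain ⟨w1, hw1, hw1G⟩ := pickP (NWs r x ∩ NWs r v1)
      (Filter.inter_mem hx.2 hv1.2.2) (insert y F)
    have hxv1 : x ≠ v1 := by
      rintro rfl
      exact hv1G (Finset.mem_insert_self _ _)
    have hw1y : w1 ≠ y := by
      rintro rfl
      exact hw1G (Finset.mem_insert_self _ _)
    refine ⟨[w1, v1], ?_, ?_, ?_⟩
    · exact chain4 (eVW hx.1 hw1.1.1 hw1.1.2) (eWV hv1.2.1 hw1.2.1 hw1.2.2)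
        (eVW hv1.1.1 hy.1 hv1.1.2)
    · exact nodup4 (hneVW hx.1 hw1.1.1) hxv1 (hneVW hx.1 hy.1)
        ((hneVW hv1.2.1 hw1.1.1).symm) hw1y (hneVW hv1.1.1 hy.1)
    · intro z hz
      rcases List.mem_cons.mp hz with rfl | hz
      · exact fun h => hw1G (Finset.mem_insert_of_mem h)
      · rw [List.mem_singleton] at hz
        subst hz
        exact fun h => hv1G (Finset.mem_insert_of_mem h)
  have hRobS1 : Robust V W c r (As r ∪ Bs r) := by
    intro x hx y hy hxy F
    rcases hx with hx | hx <;> rcases hy with hy | hy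
    · obtain ⟨w, hw, hwF⟩ := pickP (NWs r x ∩ NWs r y) (Filter.inter_mem hx.2 hy.2) F
      refine ⟨[w], chain3 (eVW hx.1 hw.1.1 hw.1.2) (eWV hy.1 hw.2.1 hw.2.2),
        nodup3 (hneVW hx.1 hw.1.1) hxy ((hneVW hy.1 hw.2.1).symm), ?_⟩
      intro z hz
      rw [List.mem_singleton] at hz
      exact hz ▸ hwF
    · exact hS1cross x hx y hy F
    · obtain ⟨m, h1, h2, h3⟩ := hS1cross y hy x hx F
      obtain ⟨h1', h2'⟩ := rev_path h1 h2
      exact ⟨m.reverse, h1', h2', fun z hz => h3 z (List.mem_reverse.mp hz)⟩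
    · obtain ⟨v, hv, hvF⟩ := pickQ (NVs r x ∩ NVs r y) (Filter.inter_mem hx.2 hy.2) F
      refine ⟨[v], chain3 (eWV hv.1.1 hx.1 hv.1.2) (eVW hv.2.1 hy.1 hv.2.2),
        nodup3 ((hneVW hv.1.1 hx.1).symm) hxy (hneVW hv.2.1 hy.1), ?_⟩
      intro z hz
      rw [List.mem_singleton] at hz
      exact hz ▸ hvF
  -- finishing device
  have finish : ∀ (j1 j2 : Fin 2) (S1 S2 : Set ℕ+), Robust V W c j1 S1 → Robust V W c j2 S2 →
      ∀ Fs : Finset ℕ+, (∀ a : ℕ+, a ∉ Fs → a ∈ S1 ∨ a ∈ S2) →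
      ∃ (i : Fin 2) (Pp : Set ℕ+), IsMonoPath (bipAdj V W) c i Pp ∧ 1 / 2 ≤ upperDensity Pp := by
    intro j1 j2 S1 S2 hR1 hR2 Fs hcov
    rcases density_dichotomy S1 S2 Fs hcov with hd | hd
    · obtain ⟨f, hinj, hch, hsub⟩ := robust_cover (upperDensity_ge_finite hd) hR1
      exact ⟨j1, Set.range f, Or.inr ⟨f, hinj, fun j => hch j, rfl⟩,
        le_trans hd (upperDensity_mono hsub)⟩
    · obtain ⟨f, hinj, hch, hsub⟩ := robust_cover (upperDensity_ge_finite hd) hR2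
      exact ⟨j2, Set.range f, Or.inr ⟨f, hinj, fun j => hch j, rfl⟩,
        le_trans hd (upperDensity_mono hsub)⟩
  by_cases hAbfin : (As b).Finite
  · -- drop the finite As b; use Bs b alone in colour b
    have hRob2 : Robust V W c b (Bs b) := by
      intro x hx y hy hxy F
      obtain ⟨v, hv, hvF⟩ := pickQ (NVs b x ∩ NVs b y) (Filter.inter_mem hx.2 hy.2) F
      refine ⟨[v], chain3 (eWV hv.1.1 hx.1 hv.1.2) (eVW hv.2.1 hy.1 hv.2.2),
        nodup3 ((hneVW hv.1.1 hx.1).symm) hxy (hneVW hv.2.1 hy.1), ?_⟩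
      intro z hz
      rw [List.mem_singleton] at hz
      exact hz ▸ hvF
    refine finish r b _ _ hRobS1 hRob2 hAbfin.toFinset ?_
    intro a ha
    rcases hsides a with hav | haw
    · rcases hAcov a hav with h | h
      · exact Or.inl (Or.inl h)
      · exact absurd (hAbfin.mem_toFinset.mpr h) ha
    · rcases hBcov a haw with h | h
      · exact Or.inl (Or.inr h)
      · exact Or.inr h
  · by_cases hBbfin : (Bs b).Finite
    · have hRob2 : Robust V W c b (As b) := by
        intro x hx y hy hxy F
        obtain ⟨w, hw, hwF⟩ := pickP (NWs b x ∩ NWs b y) (Filter.inter_mem hx.2 hy.2) F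
        refine ⟨[w], chain3 (eVW hx.1 hw.1.1 hw.1.2) (eWV hy.1 hw.2.1 hw.2.2),
          nodup3 (hneVW hx.1 hw.1.1) hxy ((hneVW hy.1 hw.2.1).symm), ?_⟩
        intro z hz
        rw [List.mem_singleton] at hz
        exact hz ▸ hwF
      refine finish r b _ _ hRobS1 hRob2 hBbfin.toFinset ?_
      intro a ha
      rcases hsides a with hav | haw
      · rcases hAcov a hav with h | h
        · exact Or.inl (Or.inl h)
        · exact Or.inr h
      · rcases hBcov a haw with h | h
        · exact Or.inl (Or.inr h)
        · exact absurd (hBbfin.mem_toFinset.mpr h) ha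
    · -- both infinite
      have hAbinf : (As b).Infinite := hAbfin
      have hBbinf : (Bs b).Infinite := hBbfin
      by_cases hbr : (∀ F : Finset ℕ+, ∃ (x y : ℕ+) (m : List ℕ+), x ∈ As b ∧ y ∈ Bs b ∧
          x ∉ F ∧ y ∉ F ∧ List.Chain' (EdgeC V W c b) (x :: (m ++ [y])) ∧
          (x :: (m ++ [y])).Nodup ∧ ∀ z ∈ m, z ∉ F)
      · -- merged case
        have hcross : ∀ x ∈ As b, ∀ y ∈ Bs b, ∀ F : Finset ℕ+,
            ∃ m : List ℕ+, List.Chain' (EdgeC V W c b) (x :: (m ++ [y])) ∧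
              (x :: (m ++ [y])).Nodup ∧ ∀ z ∈ m, z ∉ F := by
          intro x hx y hy F
          obtain ⟨x0, y0, m0, hx0, hy0, hx0F, hy0F, hch0, hnd0, hm0F⟩ := hbr (F ∪ {x, y})
          obtain ⟨w1, hw1, hw1G⟩ := pickP (NWs b x ∩ NWs b x0) (Filter.inter_mem hx.2 hx0.2)
            ((F ∪ {y, y0}) ∪ m0.toFinset)
          obtain ⟨v1, hv1, hv1G⟩ := pickQ (NVs b y0 ∩ NVs b y) (Filter.inter_mem hy0.2 hy.2)
            ((F ∪ {x, x0}) ∪ m0.toFinset)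
          -- element facts
          have hx0x : x0 ≠ x := by
            intro h
            exact hx0F (by rw [h]; simp)
          have hx0y : x0 ≠ y := hneVW hx0.1 hy.1
          have hy0y : y0 ≠ y := by
            intro h
            exact hy0F (by rw [h]; simp)
          have hm0' : ∀ z ∈ m0, z ≠ x ∧ z ≠ y ∧ z ∉ F := by
            intro z hz
            have := hm0F z hz
            simp only [Finset.mem_union, Finset.mem_insert, Finset.mem_singleton, not_or] at this
            exact ⟨this.2.1, this.2.2, this.1⟩
          have hx0F' : x0 ∉ F := by
            intro h
            exact hx0F (by simp [h])
          have hy0F' : y0 ∉ F := by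
            intro h
            exact hy0F (by simp [h])
          have hw1' : w1 ∉ F ∧ w1 ≠ y ∧ w1 ≠ y0 ∧ w1 ∉ m0 := by
            have := hw1G
            simp only [Finset.mem_union, Finset.mem_insert, Finset.mem_singleton,
              List.mem_toFinset, not_or] at this
            exact ⟨this.1.1, this.1.2.1, this.1.2.2, this.2⟩
          have hv1' : v1 ∉ F ∧ v1 ≠ x ∧ v1 ≠ x0 ∧ v1 ∉ m0 := by
            have := hv1G
            simp only [Finset.mem_union, Finset.mem_insert, Finset.mem_singleton,
              List.mem_toFinset, not_or] at this
            exact ⟨this.1.1, this.1.2.1, this.1.2.2, this.2⟩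
          refine ⟨[w1] ++ (x0 :: (m0 ++ [y0])) ++ [v1], ?_, ?_, ?_⟩
          · -- chain
            have heq : x :: (([w1] ++ (x0 :: (m0 ++ [y0])) ++ [v1]) ++ [y])
                = [x, w1] ++ ((x0 :: (m0 ++ [y0])) ++ ([v1] ++ [y])) := by simp
            rw [heq]
            apply List.isChain_append.mpr
            refine ⟨?_, ?_, ?_⟩
            · exact List.isChain_pair.mpr (eVW hx.1 hw1.1.1 hw1.1.2)
            · apply List.isChain_append.mpr
              refine ⟨hch0, List.isChain_pair.mpr (eVW hv1.2.1 hy.1 hv1.2.2), ?_⟩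
              · intro p hp q hq
                have hmid : (x0 :: (m0 ++ [y0])) = (x0 :: m0) ++ [y0] := by simp
                rw [hmid, List.getLast?_concat] at hp
                have hp' : y0 = p := by simpa using hp
                have hq' : v1 = q := by simpa using hq
                subst hp'; subst hq'
                exact eWV hv1.1.1 hy0.1 hv1.1.2
            · intro p hp q hq
              have hp' : w1 = p := by simpa using hp
              have hq' : x0 = q := by simpa using hq
              subst hp'; subst hq'
              exact eWV hx0.1 hw1.2.1 hw1.2.2
          · -- nodup
            have heq : x :: (([w1] ++ (x0 :: (m0 ++ [y0])) ++ [v1]) ++ [y])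
                = [x, w1] ++ ((x0 :: (m0 ++ [y0])) ++ ([v1] ++ [y])) := by simp
            rw [heq]
            apply List.nodup_append'.mpr
            refine ⟨?_, ?_, ?_⟩
            · simp [hneVW hx.1 hw1.1.1]
            · apply List.nodup_append'.mpr
              refine ⟨hnd0, ?_, ?_⟩
              · simp [hneVW hv1.1.1 hy.1]
              · intro a ha hb
                simp only [List.cons_append, List.nil_append, List.mem_cons,
                  List.not_mem_nil, or_false] at hb
                rcases hb with hb | hb
                · rw [hb] at ha
                  rcases List.mem_cons.mp ha with h | h
                  · exact hv1'.2.2.1 h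
                  · rcases List.mem_append.mp h with h | h
                    · exact hv1'.2.2.2 h
                    · rw [List.mem_singleton] at h
                      exact (hneVW hv1.1.1 hy0.1) h
                · rw [hb] at ha
                  rcases List.mem_cons.mp ha with h | h
                  · exact hx0y h.symm
                  · rcases List.mem_append.mp h with h | h
                    · exact (hm0' y h).2.1 rfl
                    · rw [List.mem_singleton] at h
                      exact hy0y h.symm
            · intro a ha hb
              simp only [List.mem_cons, List.mem_singleton, List.not_mem_nil, or_false] at ha
              rcases ha with ha | ha
              · -- a = x
                rw [ha] at hb
                rcases List.mem_append.mp hb with hb | hb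
                · rcases List.mem_cons.mp hb with h | hb
                  · exact hx0x h.symm
                  · rcases List.mem_append.mp hb with hb | hb
                    · exact (hm0' x hb).1 rfl
                    · rw [List.mem_singleton] at hb
                      exact (hneVW hx.1 hy0.1) hb
                · rcases List.mem_append.mp hb with hb | hb
                  · rw [List.mem_singleton] at hb
                    exact hv1'.2.1 hb.symm
                  · rw [List.mem_singleton] at hb
                    exact (hneVW hx.1 hy.1) hb
              · -- a = w1
                rw [ha] at hb
                rcases List.mem_append.mp hb with hb | hb
                · rcases List.mem_cons.mp hb with h | hb
                  · exact (hneVW hx0.1 hw1.1.1) h.symm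
                  · rcases List.mem_append.mp hb with hb | hb
                    · exact hw1'.2.2.2 hb
                    · rw [List.mem_singleton] at hb
                      exact hw1'.2.2.1 hb
                · rcases List.mem_append.mp hb with hb | hb
                  · rw [List.mem_singleton] at hb
                    exact (hneVW hv1.1.1 hw1.1.1) hb.symm
                  · rw [List.mem_singleton] at hb
                    exact hw1'.2.1 hb
          · -- avoid F
            intro z hz
            rcases List.mem_append.mp hz with hz | hz
            · rcases List.mem_append.mp hz with hz | hz
              · rw [List.mem_singleton] at hz
                exact hz ▸ hw1'.1
              · rcases List.mem_cons.mp hz with rfl | hz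
                · exact hx0F'
                · rcases List.mem_append.mp hz with hz | hz
                  · exact (hm0' z hz).2.2
                  · rw [List.mem_singleton] at hz
                    exact hz ▸ hy0F'
            · rw [List.mem_singleton] at hz
              exact hz ▸ hv1'.1
        have hRob2 : Robust V W c b (As b ∪ Bs b) := by
          intro x hx y hy hxy F
          rcases hx with hx | hx <;> rcases hy with hy | hy
          · obtain ⟨w, hw, hwF⟩ := pickP (NWs b x ∩ NWs b y) (Filter.inter_mem hx.2 hy.2) F
            refine ⟨[w], chain3 (eVW hx.1 hw.1.1 hw.1.2) (eWV hy.1 hw.2.1 hw.2.2),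
              nodup3 (hneVW hx.1 hw.1.1) hxy ((hneVW hy.1 hw.2.1).symm), ?_⟩
            intro z hz
            rw [List.mem_singleton] at hz
            exact hz ▸ hwF
          · exact hcross x hx y hy F
          · obtain ⟨m, h1, h2, h3⟩ := hcross y hy x hx F
            obtain ⟨h1', h2'⟩ := rev_path h1 h2
            exact ⟨m.reverse, h1', h2', fun z hz => h3 z (List.mem_reverse.mp hz)⟩
          · obtain ⟨v, hv, hvF⟩ := pickQ (NVs b x ∩ NVs b y) (Filter.inter_mem hx.2 hy.2) F
            refine ⟨[v], chain3 (eWV hv.1.1 hx.1 hv.1.2) (eVW hv.2.1 hy.1 hv.2.2),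
              nodup3 ((hneVW hv.1.1 hx.1).symm) hxy (hneVW hv.2.1 hy.1), ?_⟩
            intro z hz
            rw [List.mem_singleton] at hz
            exact hz ▸ hvF
        refine finish r b _ _ hRobS1 hRob2 ∅ ?_
        intro a _
        rcases hsides a with hav | haw
        · rcases hAcov a hav with h | h
          · exact Or.inl (Or.inl h)
          · exact Or.inr (Or.inl h)
        · rcases hBcov a haw with h | h
          · exact Or.inl (Or.inr h)
          · exact Or.inr (Or.inr h)
      · -- separated case
        push_neg at hbr
        obtain ⟨F0, hsep⟩ := hbr
        have key : ∀ x, x ∈ As b → x ∉ F0 → ∀ y, y ∈ Bs b → y ∉ F0 → c s(x, y) = r := by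
          intro x hx hxF y hy hyF
          rcases hrb (c s(x, y)) with h | h
          · exact h
          · exfalso
            have hch : List.Chain' (EdgeC V W c b) (x :: (([] : List ℕ+) ++ [y])) := by
              simp only [List.nil_append]
              exact List.isChain_pair.mpr ⟨Or.inl ⟨hx.1, hy.1⟩, h⟩
            have hnd : (x :: (([] : List ℕ+) ++ [y])).Nodup := by
              simp [hneVW hx.1 hy.1]
            obtain ⟨z, hz, _⟩ := hsep x y [] hx hy hxF hyF hch hnd
            exact List.not_mem_nil hz
        have hRob2 : Robust V W c r ((As b \ ↑F0) ∪ (Bs b \ ↑F0)) := by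
          intro x hx y hy hxy F
          rcases hx with hx | hx <;> rcases hy with hy | hy
          · -- both in As b \ F0
            obtain ⟨w, hw, hwF⟩ := hBbinf.exists_notMem_finset (F0 ∪ F)
            have hwF0 : w ∉ F0 := fun h => hwF (Finset.mem_union_left _ h)
            have hwF' : w ∉ F := fun h => hwF (Finset.mem_union_right _ h)
            have hxF0 : x ∉ F0 := by simpa using hx.2
            have hyF0 : y ∉ F0 := by simpa using hy.2
            refine ⟨[w], chain3 (eVW hx.1.1 hw.1 (key x hx.1 hxF0 w hw hwF0))
              (eWV hy.1.1 hw.1 (key y hy.1 hyF0 w hw hwF0)),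
              nodup3 (hneVW hx.1.1 hw.1) hxy ((hneVW hy.1.1 hw.1).symm), ?_⟩
            intro z hz
            rw [List.mem_singleton] at hz
            exact hz ▸ hwF'
          · -- x in As b \ F0, y in Bs b \ F0 : direct edge
            have hxF0 : x ∉ F0 := by simpa using hx.2
            have hyF0 : y ∉ F0 := by simpa using hy.2
            refine ⟨[], ?_, ?_, ?_⟩
            · simp only [List.nil_append]
              exact List.isChain_pair.mpr (eVW hx.1.1 hy.1.1 (key x hx.1 hxF0 y hy.1 hyF0))
            · simp [hxy]
            · intro z hz
              exact absurd hz List.not_mem_nil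
          · -- x in Bs b \ F0, y in As b \ F0 : direct edge reversed
            have hxF0 : x ∉ F0 := by simpa using hx.2
            have hyF0 : y ∉ F0 := by simpa using hy.2
            refine ⟨[], ?_, ?_, ?_⟩
            · simp only [List.nil_append]
              exact List.isChain_pair.mpr (eWV hy.1.1 hx.1.1 (key y hy.1 hyF0 x hx.1 hxF0))
            · simp [hxy]
            · intro z hz
              exact absurd hz List.not_mem_nil
          · -- both in Bs b \ F0
            obtain ⟨v, hv, hvF⟩ := hAbinf.exists_notMem_finset (F0 ∪ F)
            have hvF0 : v ∉ F0 := fun h => hvF (Finset.mem_union_left _ h)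
            have hvF' : v ∉ F := fun h => hvF (Finset.mem_union_right _ h)
            have hxF0 : x ∉ F0 := by simpa using hx.2
            have hyF0 : y ∉ F0 := by simpa using hy.2
            refine ⟨[v], chain3 (eWV hv.1 hx.1.1 (key v hv hvF0 x hx.1 hxF0))
              (eVW hv.1 hy.1.1 (key v hv hvF0 y hy.1 hyF0)),
              nodup3 ((hneVW hv.1 hx.1.1).symm) hxy (hneVW hv.1 hy.1.1), ?_⟩
            intro z hz
            rw [List.mem_singleton] at hz
            exact hz ▸ hvF'
        refine finish r r _ _ hRobS1 hRob2 F0 ?_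
        intro a ha
        rcases hsides a with hav | haw
        · rcases hAcov a hav with h | h
          · exact Or.inl (Or.inl h)
          · exact Or.inr (Or.inl ⟨h, by simpa using ha⟩)
        · rcases hBcov a haw with h | h
          · exact Or.inl (Or.inr h)
          · exact Or.inr (Or.inr ⟨h, by simpa using ha⟩)


end StmtAux

/-- In any 2-edge-colouring of `K_{V,W}`, there is a monochromatic path of
upper density at least `1/2`. -/
theorem stmt_4 (V W : Set ℕ+) (hV : V.Infinite) (hW : W.Infinite)
    (hdisj : Disjoint V W) (hunion : V ∪ W = Set.univ) (c : Sym2 ℕ+ → Fin 2) :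
    ∃ (i : Fin 2) (P : Set ℕ+),
      IsMonoPath (bipAdj V W) c i P ∧ 1 / 2 ≤ upperDensity P := by
  obtain ⟨P, hPW, hPinf⟩ := StmtAux.exists_ultra W hW
  have hcov : V ⊆ {v : ℕ+ | v ∈ V ∧ {w : ℕ+ | w ∈ W ∧ c s(v, w) = (0 : Fin 2)} ∈ P}
      ∪ {v : ℕ+ | v ∈ V ∧ {w : ℕ+ | w ∈ W ∧ c s(v, w) = (1 : Fin 2)} ∈ P} := by
    intro v hv
    have hun : {w : ℕ+ | w ∈ W ∧ c s(v, w) = (0 : Fin 2)}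
        ∪ {w : ℕ+ | w ∈ W ∧ c s(v, w) = (1 : Fin 2)} ∈ P := by
      apply Filter.mem_of_superset hPW
      intro w hw
      rcases (by decide : ∀ j : Fin 2, j = 0 ∨ j = 1) (c s(v, w)) with h | h
      · exact Or.inl ⟨hw, h⟩
      · exact Or.inr ⟨hw, h⟩
    rcases (Ultrafilter.union_mem_iff (f := P)).mp hun with h | h
    · exact Or.inl ⟨hv, h⟩
    · exact Or.inr ⟨hv, h⟩
  rcases Set.infinite_union.mp (hV.mono hcov) with h | h
  · exact StmtAux.core V W c hV hW hdisj hunion 0 1 (by decide) P hPW hPinf h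
  · exact StmtAux.core V W c hV hW hdisj hunion 1 0 (by decide) P hPW hPinf h
end

section
/- Let V and W be infinite disjoint sets with V ∪ W = ℕ, let the complete bipartite graph K_{V,W} be k-edge-coloured, and let i₀ ∈ {1,…,k}. Let V' ⊆ V and W' ⊆ W be infinite, let 𝒱' and 𝒲' be nonprincipal ultrafilters on V' and W' respectively, and set V_{i₀} = {v ∈ V : N_{i₀}(v) ∩ W' ∈ 𝒲'}. Then there exists a monochromatic path of colour i₀ whose vertex set contains V_{i₀}. -/
open Filter

/-- Colour-`i` neighbourhood of `v` in the graph with adjacency `Adj` and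
edge-colouring `c`. -/
def nbhd {k : ℕ} (Adj : ℕ+ → ℕ+ → Prop) (c : Sym2 ℕ+ → Fin k) (i : Fin k)
    (v : ℕ+) : Set ℕ+ :=
  {x | Adj v x ∧ c s(v, x) = i}

/-- `U` is an ultrafilter on the set `X`: a family of subsets of `X` closed
under finite intersections and supersets (within `X`), not containing `∅`,
and containing `Y` or `X \ Y` for every `Y ⊆ X`. -/
def IsUltrafilterOn (X : Set ℕ+) (U : Set (Set ℕ+)) : Prop :=
  (∀ A ∈ U, A ⊆ X) ∧
  (∀ A ∈ U, ∀ B ∈ U, A ∩ B ∈ U) ∧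
  (∀ A ∈ U, ∀ B, A ⊆ B → B ⊆ X → B ∈ U) ∧
  ∅ ∉ U ∧
  (∀ Y, Y ⊆ X → (Y ∈ U ∨ X \ Y ∈ U))

/-- An ultrafilter is nonprincipal if it contains no finite set. -/
def NonprincipalOn (U : Set (Set ℕ+)) : Prop := ∀ A ∈ U, ¬ A.Finite

noncomputable def cAux (T : ℕ → Set ℕ+) (hT : ∀ j, (T j).Infinite) : ℕ → ℕ+ × Finset ℕ+
  | 0 =>
    ⟨((hT 0).diff (Finset.finite_toSet ∅)).nonempty.choose,
      {((hT 0).diff (Finset.finite_toSet ∅)).nonempty.choose}⟩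
  | j+1 =>
    ⟨((hT (j+1)).diff (cAux T hT j).2.finite_toSet).nonempty.choose,
      insert (((hT (j+1)).diff (cAux T hT j).2.finite_toSet).nonempty.choose) (cAux T hT j).2⟩

lemma cAux_fst_mem (T : ℕ → Set ℕ+) (hT : ∀ j, (T j).Infinite) (j : ℕ) :
    (cAux T hT j).1 ∈ T j := by
  cases j with
  | zero => exact ((hT 0).diff (Finset.finite_toSet ∅)).nonempty.choose_spec.1
  | succ j => exact ((hT (j+1)).diff (cAux T hT j).2.finite_toSet).nonempty.choose_spec.1

lemma cAux_fst_mem_snd (T : ℕ → Set ℕ+) (hT : ∀ j, (T j).Infinite) :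
    ∀ i j, i ≤ j → (cAux T hT i).1 ∈ (cAux T hT j).2 := by
  intro i j hij
  induction j with
  | zero =>
    interval_cases i
    simp [cAux]
  | succ j ih =>
    rcases Nat.lt_or_ge i (j+1) with h | h
    · have := ih (Nat.lt_succ_iff.mp h)
      simp [cAux, Finset.mem_insert, this]
    · have : i = j + 1 := le_antisymm hij h
      subst this
      simp [cAux]

lemma cAux_inj (T : ℕ → Set ℕ+) (hT : ∀ j, (T j).Infinite) :
    Function.Injective (fun j => (cAux T hT j).1) := by
  have key : ∀ i j, i < j → (cAux T hT i).1 ≠ (cAux T hT j).1 := by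
    intro i j hij
    obtain ⟨t, rfl⟩ : ∃ t, j = t + 1 := ⟨j - 1, by omega⟩
    have h1 : (cAux T hT i).1 ∈ (cAux T hT t).2 :=
      cAux_fst_mem_snd T hT i t (by omega)
    have h2 : (cAux T hT (t+1)).1 ∉ ((cAux T hT t).2 : Set ℕ+) :=
      ((hT (t+1)).diff (cAux T hT t).2.finite_toSet).nonempty.choose_spec.2
    intro h
    exact h2 (by rw [← h]; exact_mod_cast h1)
  intro a b h
  by_contra hne
  rcases Nat.lt_or_ge a b with hl | hl
  · exact key a b hl h
  · exact key b a (by omega) h.symm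


/-- Lemma 3.1 (first part): there is a path of colour `i₀` containing
`V_{i₀} = {v ∈ V : N_{i₀}(v) ∩ W' ∈ 𝒲'}`. -/
theorem stmt_9 (V W : Set ℕ+) (hV : V.Infinite) (hW : W.Infinite)
    (hdisj : Disjoint V W) (hunion : V ∪ W = Set.univ)
    (k : ℕ) (c : Sym2 ℕ+ → Fin k) (i₀ : Fin k)
    (V' W' : Set ℕ+) (hV'sub : V' ⊆ V) (hW'sub : W' ⊆ W)
    (hV'inf : V'.Infinite) (hW'inf : W'.Infinite)
    (𝒱 𝒲 : Set (Set ℕ+))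
    (h𝒱 : IsUltrafilterOn V' 𝒱) (h𝒱np : NonprincipalOn 𝒱)
    (h𝒲 : IsUltrafilterOn W' 𝒲) (h𝒲np : NonprincipalOn 𝒲) :
    ∃ P : Set ℕ+, IsMonoPath (bipAdj V W) c i₀ P ∧
      {v | v ∈ V ∧ nbhd (bipAdj V W) c i₀ v ∩ W' ∈ 𝒲} ⊆ P := by
  classical
  set N : ℕ+ → Set ℕ+ := nbhd (bipAdj V W) c i₀ with hN
  set S : Set ℕ+ := {v | v ∈ V ∧ N v ∩ W' ∈ 𝒲} with hSdef
  obtain ⟨husub, hinter, hsuper, hnemem, hall⟩ := h𝒲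
  -- key infiniteness fact
  have key : ∀ v1 ∈ S, ∀ v2 ∈ S, (N v1 ∩ N v2 ∩ W').Infinite := by
    intro v1 h1 v2 h2
    have hm : (N v1 ∩ W') ∩ (N v2 ∩ W') ∈ 𝒲 := hinter _ h1.2 _ h2.2
    have heq : (N v1 ∩ W') ∩ (N v2 ∩ W') = N v1 ∩ N v2 ∩ W' := by
      ext x; simp only [Set.mem_inter_iff]; tauto
    rw [heq] at hm
    exact h𝒲np _ hm
  have hSV : ∀ v ∈ S, v ∈ V := fun v hv => hv.1
  have hTW' : ∀ v1 v2, N v1 ∩ N v2 ∩ W' ⊆ W' := fun _ _ => Set.inter_subset_right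
  rcases Set.eq_empty_or_nonempty S with hSe | hSne
  · -- empty: trivial path
    refine ⟨∅, Or.inl ⟨0, Fin.elim0, fun a => a.elim0, fun j h => by omega, ?_⟩, by
      rw [hSe]⟩
    ext x; simp
  rcases Set.finite_or_infinite S with hfin | hinf
  · -- finite nonempty case
    set m : ℕ := hfin.toFinset.card with hm
    have hmpos : 0 < m := by
      rw [hm, Finset.card_pos, Set.Finite.toFinset_nonempty]
      exact hSne
    let q := hfin.toFinset.equivFin
    let v : Fin m → ℕ+ := fun i => (q.symm i : ℕ+)
    have hvinj : Function.Injective v :=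
      Subtype.val_injective.comp q.symm.injective
    have hvS : ∀ i, v i ∈ S := fun i => hfin.mem_toFinset.mp (q.symm i).2
    have hvsurj : ∀ s ∈ S, ∃ i, v i = s := by
      intro s hs
      exact ⟨q ⟨s, hfin.mem_toFinset.mpr hs⟩, by simp [v]⟩
    let v' : ℕ → ℕ+ := fun j => v ⟨j % m, Nat.mod_lt _ hmpos⟩
    have hv'S : ∀ j, v' j ∈ S := fun j => hvS _
    let T : ℕ → Set ℕ+ := fun j => N (v' j) ∩ N (v' (j+1)) ∩ W'
    have hT : ∀ j, (T j).Infinite := fun j => key _ (hv'S j) _ (hv'S (j+1))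
    let w : ℕ → ℕ+ := fun j => (cAux T hT j).1
    have hwT : ∀ j, w j ∈ T j := fun j => cAux_fst_mem T hT j
    have hwinj : Function.Injective w := cAux_inj T hT
    have hwW : ∀ j, w j ∈ W := fun j => hW'sub (hTW' _ _ (hwT j))
    let n : ℕ := 2 * m - 1
    let f : Fin n → ℕ+ := fun j =>
      if (j : ℕ) % 2 = 0 then v' ((j : ℕ) / 2) else w ((j : ℕ) / 2)
    have hfval : ∀ (t : ℕ) (h : 2 * t < n), f ⟨2 * t, h⟩ = v' t := by
      intro t h
      have h1 : (2 * t) % 2 = 0 := by omega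
      have h2 : (2 * t) / 2 = t := by omega
      simp [f, h1, h2]
    have hfval' : ∀ (t : ℕ) (h : 2 * t + 1 < n), f ⟨2 * t + 1, h⟩ = w t := by
      intro t h
      have h1 : (2 * t + 1) % 2 = 1 := by omega
      have h2 : (2 * t + 1) / 2 = t := by omega
      simp [f, h1, h2]
    have hv'V : ∀ j, v' j ∈ V := fun j => hSV _ (hv'S j)
    have hv'inj : ∀ a b, a < m → b < m → v' a = v' b → a = b := by
      intro a b ha hb h
      have : (⟨a % m, Nat.mod_lt _ hmpos⟩ : Fin m) = ⟨b % m, Nat.mod_lt _ hmpos⟩ :=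
        hvinj h
      simp only [Fin.mk.injEq] at this
      rwa [Nat.mod_eq_of_lt ha, Nat.mod_eq_of_lt hb] at this
    have hne : ∀ a b, v' a ≠ w b := by
      intro a b h
      exact (hdisj.ne_of_mem (hv'V a) (hwW b)) h
    refine ⟨Set.range f, Or.inl ⟨n, f, ?_, ?_, rfl⟩, ?_⟩
    · -- injective
      intro a b h
      have ha := a.2; have hb := b.2
      rcases Nat.even_or_odd (a : ℕ) with ⟨ta, hta⟩ | ⟨ta, hta⟩ <;>
        rcases Nat.even_or_odd (b : ℕ) with ⟨tb, htb⟩ | ⟨tb, htb⟩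
      · have ea : f a = v' ta := by
          have : a = ⟨2 * ta, by omega⟩ := by apply Fin.ext; simp only [Fin.val_mk]; omega
          rw [this]; exact hfval ta (by omega)
        have eb : f b = v' tb := by
          have : b = ⟨2 * tb, by omega⟩ := by apply Fin.ext; simp only [Fin.val_mk]; omega
          rw [this]; exact hfval tb (by omega)
        rw [ea, eb] at h
        have : ta = tb := hv'inj ta tb (by omega) (by omega) h
        ext; omega
      · exfalso
        have ea : f a = v' ta := by
          have : a = ⟨2 * ta, by omega⟩ := by apply Fin.ext; simp only [Fin.val_mk]; omega
          rw [this]; exact hfval ta (by omega)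
        have eb : f b = w tb := by
          have : b = ⟨2 * tb + 1, by omega⟩ := by apply Fin.ext; simp only [Fin.val_mk]; omega
          rw [this]; exact hfval' tb (by omega)
        exact hne ta tb (ea ▸ eb ▸ h)
      · exfalso
        have ea : f a = w ta := by
          have : a = ⟨2 * ta + 1, by omega⟩ := by apply Fin.ext; simp only [Fin.val_mk]; omega
          rw [this]; exact hfval' ta (by omega)
        have eb : f b = v' tb := by
          have : b = ⟨2 * tb, by omega⟩ := by apply Fin.ext; simp only [Fin.val_mk]; omega
          rw [this]; exact hfval tb (by omega)
        exact hne tb ta (eb ▸ ea ▸ h.symm)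
      · have ea : f a = w ta := by
          have : a = ⟨2 * ta + 1, by omega⟩ := by apply Fin.ext; simp only [Fin.val_mk]; omega
          rw [this]; exact hfval' ta (by omega)
        have eb : f b = w tb := by
          have : b = ⟨2 * tb + 1, by omega⟩ := by apply Fin.ext; simp only [Fin.val_mk]; omega
          rw [this]; exact hfval' tb (by omega)
        rw [ea, eb] at h
        have : ta = tb := hwinj h
        ext; omega
    · -- edges
      intro j h
      rcases Nat.even_or_odd j with ⟨t, ht⟩ | ⟨t, ht⟩
      · have e1 : f ⟨j, Nat.lt_of_succ_lt h⟩ = v' t := by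
          have : (⟨j, Nat.lt_of_succ_lt h⟩ : Fin n) = ⟨2 * t, by omega⟩ := by apply Fin.ext; simp only [Fin.val_mk]; omega
          rw [this]; exact hfval t (by omega)
        have e2 : f ⟨j + 1, h⟩ = w t := by
          have : (⟨j + 1, h⟩ : Fin n) = ⟨2 * t + 1, by omega⟩ := by apply Fin.ext; simp only [Fin.val_mk]; omega
          rw [this]; exact hfval' t (by omega)
        rw [e1, e2]
        have := (hwT t).1.1
        exact ⟨this.1, this.2⟩
      · have e1 : f ⟨j, Nat.lt_of_succ_lt h⟩ = w t := by
          have : (⟨j, Nat.lt_of_succ_lt h⟩ : Fin n) = ⟨2 * t + 1, by omega⟩ := by apply Fin.ext; simp only [Fin.val_mk]; omega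
          rw [this]; exact hfval' t (by omega)
        have e2 : f ⟨j + 1, h⟩ = v' (t + 1) := by
          have : (⟨j + 1, h⟩ : Fin n) = ⟨2 * (t + 1), by omega⟩ := by apply Fin.ext; simp only [Fin.val_mk]; omega
          rw [this]; exact hfval (t + 1) (by omega)
        rw [e1, e2]
        have h2 := (hwT t).1.2
        constructor
        · rcases h2.1 with ⟨hx, hy⟩ | ⟨hx, hy⟩
          · exact Or.inr ⟨hy, hx⟩
          · exact Or.inl ⟨hy, hx⟩
        · rw [Sym2.eq_swap]; exact h2.2
    · -- containment
      intro s hs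
      obtain ⟨i, hi⟩ := hvsurj s hs
      have hlt : 2 * (i : ℕ) < n := by
        have := i.2; omega
      refine ⟨⟨2 * (i : ℕ), hlt⟩, ?_⟩
      have hv'i : v' (i : ℕ) = v i := by
        simp only [v']
        congr 1
        exact Fin.ext (by simp [Nat.mod_eq_of_lt i.2])
      rw [hfval _ hlt, hv'i]
      exact hi
  · -- infinite case
    haveI : Infinite S := hinf.to_subtype
    haveI : Encodable S := Encodable.ofCountable _
    haveI : Denumerable S := Denumerable.ofEncodableOfInfinite S
    let e : ℕ → ℕ+ := fun j => ((Denumerable.eqv S).symm j : ℕ+)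
    have heinj : Function.Injective e :=
      Subtype.val_injective.comp (Denumerable.eqv S).symm.injective
    have heS : ∀ j, e j ∈ S := fun j => ((Denumerable.eqv S).symm j).2
    have hesurj : ∀ s ∈ S, ∃ j, e j = s := by
      intro s hs
      exact ⟨Denumerable.eqv S ⟨s, hs⟩, by simp [e]⟩
    let T : ℕ → Set ℕ+ := fun j => N (e j) ∩ N (e (j+1)) ∩ W'
    have hT : ∀ j, (T j).Infinite := fun j => key _ (heS j) _ (heS (j+1))
    let w : ℕ → ℕ+ := fun j => (cAux T hT j).1
    have hwT : ∀ j, w j ∈ T j := fun j => cAux_fst_mem T hT j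
    have hwinj : Function.Injective w := cAux_inj T hT
    have hwW : ∀ j, w j ∈ W := fun j => hW'sub (hTW' _ _ (hwT j))
    have heV : ∀ j, e j ∈ V := fun j => hSV _ (heS j)
    let f : ℕ → ℕ+ := fun j => if j % 2 = 0 then e (j / 2) else w (j / 2)
    have hfval : ∀ t, f (2 * t) = e t := by
      intro t
      have h1 : (2 * t) % 2 = 0 := by omega
      have h2 : (2 * t) / 2 = t := by omega
      simp [f, h1, h2]
    have hfval' : ∀ t, f (2 * t + 1) = w t := by
      intro t
      have h1 : (2 * t + 1) % 2 = 1 := by omega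
      have h2 : (2 * t + 1) / 2 = t := by omega
      simp [f, h1, h2]
    have hne : ∀ a b, e a ≠ w b := by
      intro a b h
      exact (hdisj.ne_of_mem (heV a) (hwW b)) h
    refine ⟨Set.range f, Or.inr ⟨f, ?_, ?_, rfl⟩, ?_⟩
    · intro a b h
      rcases Nat.even_or_odd a with ⟨ta, hta⟩ | ⟨ta, hta⟩ <;>
        rcases Nat.even_or_odd b with ⟨tb, htb⟩ | ⟨tb, htb⟩
      · rw [show a = 2 * ta by omega, show b = 2 * tb by omega, hfval, hfval] at h
        have := heinj h; omega
      · rw [show a = 2 * ta by omega, show b = 2 * tb + 1 by omega, hfval, hfval'] at h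
        exact absurd h (hne ta tb)
      · rw [show a = 2 * ta + 1 by omega, show b = 2 * tb by omega, hfval', hfval] at h
        exact absurd h.symm (hne tb ta)
      · rw [show a = 2 * ta + 1 by omega, show b = 2 * tb + 1 by omega, hfval', hfval'] at h
        have := hwinj h; omega
    · intro j
      rcases Nat.even_or_odd j with ⟨t, ht⟩ | ⟨t, ht⟩
      · rw [show j = 2 * t by omega]
        rw [show 2 * t + 1 = 2 * t + 1 from rfl, hfval, hfval']
        have := (hwT t).1.1
        exact ⟨this.1, this.2⟩
      · rw [show j = 2 * t + 1 by omega]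
        rw [show 2 * t + 1 + 1 = 2 * (t + 1) by omega, hfval', hfval]
        have h2 := (hwT t).1.2
        constructor
        · rcases h2.1 with ⟨hx, hy⟩ | ⟨hx, hy⟩
          · exact Or.inr ⟨hy, hx⟩
          · exact Or.inl ⟨hy, hx⟩
        · rw [Sym2.eq_swap]; exact h2.2
    · intro s hs
      obtain ⟨j, hj⟩ := hesurj s hs
      exact ⟨2 * j, by rw [hfval]; exact hj⟩
end

section
/- Let V and W be infinite disjoint sets with V ∪ W = ℕ, let the complete bipartite graph K_{V,W} be k-edge-coloured, and let i₀ ∈ {1,…,k}. Let V' ⊆ V and W' ⊆ W be infinite, let 𝒱' and 𝒲' be nonprincipal ultrafilters on V' and W' respectively, and set V_{i₀} = {v ∈ V : N_{i₀}(v) ∩ W' ∈ 𝒲'} and W_{i₀} = {w ∈ W : N_{i₀}(w) ∩ V' ∈ 𝒱'}. Let U*_{i₀} be the set of vertices v ∈ V_{i₀} ∪ W_{i₀} such that N_{i₀}(v) ∩ (V_{i₀} ∪ W_{i₀}) is infinite. If U*_{i₀} is infinite, then there exists a monochromatic path of colour i₀ whose vertex set contains V_{i₀} ∪ W_{i₀}.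 -/
open Filter

noncomputable def iterSeq {α : Type*} {P : List α → Prop} (Q : ℕ → List α → List α → Prop)
    (L0 : List α) (h0 : P L0)
    (step : ∀ (n : ℕ) (L : List α), P L → ∃ L', P L' ∧ Q n L L') : ℕ → {L : List α // P L}
  | 0 => ⟨L0, h0⟩
  | n + 1 =>
    ⟨(step n (iterSeq Q L0 h0 step n).1 (iterSeq Q L0 h0 step n).2).choose,
     (step n (iterSeq Q L0 h0 step n).1 (iterSeq Q L0 h0 step n).2).choose_spec.1⟩

lemma iterSeq_succ {α : Type*} {P : List α → Prop} (Q : ℕ → List α → List α → Prop)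
    (L0 : List α) (h0 : P L0)
    (step : ∀ (n : ℕ) (L : List α), P L → ∃ L', P L' ∧ Q n L L') (n : ℕ) :
    Q n (iterSeq Q L0 h0 step n).1 (iterSeq Q L0 h0 step (n + 1)).1 :=
  (step n (iterSeq Q L0 h0 step n).1 (iterSeq Q L0 h0 step n).2).choose_spec.2

lemma build_path (R : ℕ+ → ℕ+ → Prop) (S A : Set ℕ+)
    (hAS : A ⊆ S) (hAinf : A.Infinite)
    (H : ∀ z ∈ A, ∀ u ∈ S, ∀ T : Finset ℕ+,
      ∃ L : List ℕ+, L ≠ [] ∧ List.IsChain R (z :: L) ∧ L.Nodup ∧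
        (∀ x ∈ L, x ∉ T) ∧ (∀ h : L ≠ [], L.getLast h ∈ A) ∧ (u ∈ L ∨ u ∈ T)) :
    ∃ f : ℕ → ℕ+, Function.Injective f ∧ (∀ j, R (f j) (f (j + 1))) ∧ S ⊆ Set.range f := by
  obtain ⟨a0, ha0⟩ := hAinf.nonempty
  obtain ⟨e, hse⟩ := (Set.to_countable S).exists_eq_range ⟨a0, hAS ha0⟩
  set Inv : List ℕ+ → Prop :=
    fun L => ∃ h : L ≠ [], List.IsChain R L ∧ L.Nodup ∧ L.getLast h ∈ A with hInv
  have h0 : Inv [a0] := ⟨by simp, by simp, by simp, by simpa using ha0⟩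
  have step : ∀ (n : ℕ) (L : List ℕ+), Inv L →
      ∃ L', Inv L' ∧ (L <+: L' ∧ L.length < L'.length ∧ e n ∈ L') := by
    intro n L hL
    obtain ⟨hne, hch, hnd, hlast⟩ := hL
    have hu : e n ∈ S := by rw [hse]; exact Set.mem_range_self n
    obtain ⟨L₁, hL₁ne, hL₁ch, hL₁nd, hL₁fresh, hL₁last, hL₁u⟩ :=
      H (L.getLast hne) hlast (e n) hu L.toFinset
    refine ⟨L ++ L₁, ⟨by simp [hne], ?_, ?_, ?_⟩, L.prefix_append L₁, ?_, ?_⟩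
    · rw [List.isChain_append]
      refine ⟨hch, (List.isChain_cons.mp hL₁ch).2, ?_⟩
      intro x hx y hy
      rw [List.getLast?_eq_getLast hne, Option.mem_some_iff] at hx
      subst hx
      exact (List.isChain_cons.mp hL₁ch).1 y hy
    · rw [List.nodup_append]
      exact ⟨hnd, hL₁nd, fun a ha b hb hab => by subst hab; exact hL₁fresh a hb (List.mem_toFinset.mpr ha)⟩
    · rw [List.getLast_append_of_ne_nil _ hL₁ne]
      exact hL₁last hL₁ne
    · have : 0 < L₁.length := List.length_pos_iff.mpr hL₁ne
      simp only [List.length_append]; omega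
    · rcases hL₁u with h | h
      · exact List.mem_append_right L h
      · exact List.mem_append_left L₁ (List.mem_toFinset.mp h)
  set F : ℕ → List ℕ+ := fun n => (iterSeq _ [a0] h0 step n).1 with hF
  have hQ : ∀ n, F n <+: F (n + 1) ∧ (F n).length < (F (n + 1)).length ∧ e n ∈ F (n + 1) :=
    fun n => iterSeq_succ _ [a0] h0 step n
  have hInvF : ∀ n, Inv (F n) := fun n => (iterSeq _ [a0] h0 step n).2
  have hlen : ∀ n, n < (F n).length := by
    intro n
    induction n with
    | zero => simp [hF, iterSeq]
    | succ n ih => exact Nat.lt_of_le_of_lt ih (hQ n).2.1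
  have hpref : ∀ m n, m ≤ n → F m <+: F n := by
    intro m n hmn
    induction n, hmn using Nat.le_induction with
    | base => exact List.prefix_refl _
    | succ n hmn ih => exact ih.trans (hQ n).1
  have hidx : ∀ j m, j < m → j < (F m).length :=
    fun j m hjm => Nat.lt_of_lt_of_le hjm (Nat.le_of_lt (hlen m))
  set f : ℕ → ℕ+ := fun j => (F (j + 1))[j]'(hidx j (j + 1) (Nat.lt_succ_self j)) with hf
  have hagree : ∀ (m j : ℕ) (hj : j < (F m).length), f j = (F m)[j]'hj := by
    intro m j hj
    rcases Nat.le_total (j + 1) m with h | h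
    · exact (hpref _ _ h).getElem _
    · exact ((hpref _ _ h).getElem hj).symm
  refine ⟨f, ?_, ?_, ?_⟩
  · intro a b hab
    set m := a + b + 1 with hm
    have ha' : a < (F m).length := hidx a m (by omega)
    have hb' : b < (F m).length := hidx b m (by omega)
    rw [hagree m a ha', hagree m b hb'] at hab
    exact ((hInvF m).2.2.1.getElem_inj_iff).mp hab
  · intro j
    have h1 : j < (F (j + 2)).length := hidx j (j + 2) (by omega)
    have h2 : j + 1 < (F (j + 2)).length := hidx (j + 1) (j + 2) (by omega)
    rw [hagree (j + 2) j h1, hagree (j + 2) (j + 1) h2]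
    have hch := (hInvF (j + 2)).2.1
    rw [List.isChain_iff_getElem] at hch
    have := hlen (j + 2)
    exact hch j (by omega)
  · intro u hu
    rw [hse] at hu
    obtain ⟨n, rfl⟩ := hu
    obtain ⟨j, hj, hju⟩ := List.mem_iff_getElem.mp (hQ n).2.2
    exact ⟨j, (hagree (n + 1) j hj).trans hju⟩

lemma key {k : ℕ} (Adj : ℕ+ → ℕ+ → Prop) (hsymm : ∀ x y, Adj x y → Adj y x)
    (c : Sym2 ℕ+ → Fin k) (i₀ : Fin k) (Vi Wi A : Set ℕ+)
    (hVV : ∀ x ∈ Vi, ∀ y ∈ Vi, (nbhd Adj c i₀ x ∩ nbhd Adj c i₀ y).Infinite)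
    (hWW : ∀ x ∈ Wi, ∀ y ∈ Wi, (nbhd Adj c i₀ x ∩ nbhd Adj c i₀ y).Infinite)
    (hAsub : A ⊆ Vi) (hAinf : A.Infinite)
    (hA : ∀ z ∈ A, (nbhd Adj c i₀ z ∩ Wi).Infinite) :
    ∃ P : Set ℕ+, IsMonoPath Adj c i₀ P ∧ Vi ∪ Wi ⊆ P := by
  set R : ℕ+ → ℕ+ → Prop := fun x y => Adj x y ∧ c s(x, y) = i₀ with hR
  have hRmem : ∀ v x, x ∈ nbhd Adj c i₀ v → R v x := fun v x hx => hx
  have hRsymm : ∀ v x, x ∈ nbhd Adj c i₀ v → R x v := by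
    intro v x hx
    exact ⟨hsymm _ _ hx.1, by rw [Sym2.eq_swap]; exact hx.2⟩
  have H : ∀ z ∈ A, ∀ u ∈ Vi ∪ Wi, ∀ T : Finset ℕ+,
      ∃ L : List ℕ+, L ≠ [] ∧ List.IsChain R (z :: L) ∧ L.Nodup ∧
        (∀ x ∈ L, x ∉ T) ∧ (∀ h : L ≠ [], L.getLast h ∈ A) ∧ (u ∈ L ∨ u ∈ T) := by
    intro z hz u hu T
    by_cases huT : u ∈ T
    · -- bounce
      obtain ⟨z', hz'A, hz'⟩ := hAinf.exists_notMem_finset (insert z T)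
      simp only [Finset.mem_insert, not_or] at hz'
      obtain ⟨w, hw, hw'⟩ := (hVV z (hAsub hz) z' (hAsub hz'A)).exists_notMem_finset
        (insert z (insert z' T))
      simp only [Finset.mem_insert, not_or] at hw'
      refine ⟨[w, z'], by simp, ?_, by simp [hw'.2.1], ?_, by simp [hz'A], Or.inr huT⟩
      · simp only [List.isChain_cons_cons, List.isChain_singleton, and_true]
        exact ⟨hRmem z w hw.1, hRsymm z' w hw.2⟩
      · intro x hx
        simp only [List.mem_cons, List.mem_singleton, List.not_mem_nil, or_false] at hx
        rcases hx with rfl | rfl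
        · exact hw'.2.2
        · exact hz'.2
    · rcases hu with huVi | huWi
      · -- u ∈ Vi
        obtain ⟨z', hz'A, hz'⟩ := hAinf.exists_notMem_finset (insert u (insert z T))
        simp only [Finset.mem_insert, not_or] at hz'
        obtain ⟨w1, hw1, hw1'⟩ := (hVV z (hAsub hz) u huVi).exists_notMem_finset
          (insert u (insert z (insert z' T)))
        simp only [Finset.mem_insert, not_or] at hw1'
        obtain ⟨w2, hw2, hw2'⟩ := (hVV u huVi z' (hAsub hz'A)).exists_notMem_finset
          (insert u (insert z (insert z' (insert w1 T))))
        simp only [Finset.mem_insert, not_or] at hw2'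
        refine ⟨[w1, u, w2, z'], by simp, ?_, ?_, ?_, by simp [hz'A], Or.inl (by simp)⟩
        · simp only [List.isChain_cons_cons, List.isChain_singleton, and_true]
          exact ⟨hRmem z w1 hw1.1, hRsymm u w1 hw1.2, hRmem u w2 hw2.1, hRsymm z' w2 hw2.2⟩
        · simp only [List.nodup_cons, List.mem_cons, List.mem_singleton, List.not_mem_nil,
            or_false, List.nodup_nil, and_true, not_or]
          exact ⟨⟨hw1'.1, fun h => hw2'.2.2.2.1 h.symm, hw1'.2.2.1⟩,
            ⟨fun h => hw2'.1 h.symm, fun h => hz'.1 h.symm⟩, ⟨hw2'.2.2.1, not_false⟩⟩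
        · intro x hx
          simp only [List.mem_cons, List.mem_singleton, List.not_mem_nil, or_false] at hx
          rcases hx with rfl | rfl | rfl | rfl
          · exact hw1'.2.2.2
          · exact huT
          · exact hw2'.2.2.2.2
          · exact hz'.2.2
      · -- u ∈ Wi
        obtain ⟨z', hz'A, hz'⟩ := hAinf.exists_notMem_finset (insert u (insert z T))
        simp only [Finset.mem_insert, not_or] at hz'
        obtain ⟨w1, hw1, hw1'⟩ := (hA z hz).exists_notMem_finset
          (insert u (insert z (insert z' T)))
        simp only [Finset.mem_insert, not_or] at hw1'
        obtain ⟨w2, hw2, hw2'⟩ := (hA z' hz'A).exists_notMem_finset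
          (insert u (insert z (insert z' (insert w1 T))))
        simp only [Finset.mem_insert, not_or] at hw2'
        obtain ⟨v1, hv1, hv1'⟩ := (hWW w1 hw1.2 u huWi).exists_notMem_finset
          (insert u (insert z (insert z' (insert w1 (insert w2 T)))))
        simp only [Finset.mem_insert, not_or] at hv1'
        obtain ⟨v2, hv2, hv2'⟩ := (hWW w2 hw2.2 u huWi).exists_notMem_finset
          (insert u (insert z (insert z' (insert w1 (insert w2 (insert v1 T))))))
        simp only [Finset.mem_insert, not_or] at hv2'
        refine ⟨[w1, v1, u, v2, w2, z'], by simp, ?_, ?_, ?_, by simp [hz'A], Or.inl (by simp)⟩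
        · simp only [List.isChain_cons_cons, List.isChain_singleton, and_true]
          exact ⟨hRmem z w1 hw1.1, hRmem w1 v1 hv1.1, hRsymm u v1 hv1.2,
            hRmem u v2 hv2.2, hRsymm w2 v2 hv2.1, hRsymm z' w2 hw2.1⟩
        · simp only [List.nodup_cons, List.mem_cons, List.mem_singleton, List.not_mem_nil,
            or_false, List.nodup_nil, and_true, not_or]
          refine ⟨⟨fun h => hv1'.2.2.2.1 h.symm, hw1'.1, fun h => hv2'.2.2.2.1 h.symm,
              fun h => hw2'.2.2.2.1 h.symm, hw1'.2.2.1⟩,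
            ⟨hv1'.1, fun h => hv2'.2.2.2.2.2.1 h.symm, fun h => hv1'.2.2.2.2.1 h,
              hv1'.2.2.1⟩,
            ⟨fun h => hv2'.1 h.symm, fun h => hw2'.1 h.symm, fun h => hz'.1 h.symm⟩,
            ⟨fun h => hv2'.2.2.2.2.1 h, hv2'.2.2.1⟩,
            ⟨hw2'.2.2.1, not_false⟩⟩
        · intro x hx
          simp only [List.mem_cons, List.mem_singleton, List.not_mem_nil, or_false] at hx
          rcases hx with rfl | rfl | rfl | rfl | rfl | rfl
          · exact hw1'.2.2.2
          · exact hv1'.2.2.2.2.2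
          · exact huT
          · exact hv2'.2.2.2.2.2.2
          · exact hw2'.2.2.2.2
          · exact hz'.2.2
  obtain ⟨f, hfi, hfc, hfs⟩ := build_path R (Vi ∪ Wi) A
    (hAsub.trans Set.subset_union_left) hAinf H
  exact ⟨Set.range f, Or.inr ⟨f, hfi, hfc, rfl⟩, hfs⟩


/-- Lemma 3.1 (second part): with
`V_{i₀} = {v ∈ V : N_{i₀}(v) ∩ W' ∈ 𝒲'}` and
`W_{i₀} = {w ∈ W : N_{i₀}(w) ∩ V' ∈ 𝒱'}`, if the set `U*_{i₀}` of vertices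
`v ∈ V_{i₀} ∪ W_{i₀}` with `N_{i₀}(v) ∩ (V_{i₀} ∪ W_{i₀})` infinite is itself
infinite, then there is a path of colour `i₀` containing `V_{i₀} ∪ W_{i₀}`. -/
theorem stmt_10 (V W : Set ℕ+) (hV : V.Infinite) (hW : W.Infinite)
    (hdisj : Disjoint V W) (hunion : V ∪ W = Set.univ)
    (k : ℕ) (c : Sym2 ℕ+ → Fin k) (i₀ : Fin k)
    (V' W' : Set ℕ+) (hV'sub : V' ⊆ V) (hW'sub : W' ⊆ W)
    (hV'inf : V'.Infinite) (hW'inf : W'.Infinite)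
    (𝒱 𝒲 : Set (Set ℕ+))
    (h𝒱 : IsUltrafilterOn V' 𝒱) (h𝒱np : NonprincipalOn 𝒱)
    (h𝒲 : IsUltrafilterOn W' 𝒲) (h𝒲np : NonprincipalOn 𝒲)
    (Vi Wi Ustar : Set ℕ+)
    (hVi : Vi = {v | v ∈ V ∧ nbhd (bipAdj V W) c i₀ v ∩ W' ∈ 𝒲})
    (hWi : Wi = {w | w ∈ W ∧ nbhd (bipAdj V W) c i₀ w ∩ V' ∈ 𝒱})
    (hUstar : Ustar = {v | v ∈ Vi ∪ Wi ∧ (nbhd (bipAdj V W) c i₀ v ∩ (Vi ∪ Wi)).Infinite})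
    (hUinf : Ustar.Infinite) :
    ∃ P : Set ℕ+, IsMonoPath (bipAdj V W) c i₀ P ∧ Vi ∪ Wi ⊆ P := by

  have hNsub : ∀ (z : ℕ+), z ∈ V → nbhd (bipAdj V W) c i₀ z ⊆ W := by
    intro z hzV x hx
    rcases hx.1 with h | h
    · exact h.2
    · exact absurd hzV (Set.disjoint_right.mp hdisj h.1)
  have hNsub' : ∀ (z : ℕ+), z ∈ W → nbhd (bipAdj V W) c i₀ z ⊆ V := by
    intro z hzW x hx
    rcases hx.1 with h | h
    · exact absurd hzW (Set.disjoint_left.mp hdisj h.1)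
    · exact h.2
  have hViV : Vi ⊆ V := by rw [hVi]; exact fun v hv => hv.1
  have hWiW : Wi ⊆ W := by rw [hWi]; exact fun v hv => hv.1
  have hVV : ∀ x ∈ Vi, ∀ y ∈ Vi,
      (nbhd (bipAdj V W) c i₀ x ∩ nbhd (bipAdj V W) c i₀ y).Infinite := by
    intro x hx y hy
    rw [hVi] at hx hy
    have hmem := h𝒲.2.1 _ hx.2 _ hy.2
    have : ¬ ((nbhd (bipAdj V W) c i₀ x ∩ W') ∩ (nbhd (bipAdj V W) c i₀ y ∩ W')).Finite :=
      h𝒲np _ hmem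
    exact Set.Infinite.mono (fun a ha => ⟨ha.1.1, ha.2.1⟩) this
  have hWW : ∀ x ∈ Wi, ∀ y ∈ Wi,
      (nbhd (bipAdj V W) c i₀ x ∩ nbhd (bipAdj V W) c i₀ y).Infinite := by
    intro x hx y hy
    rw [hWi] at hx hy
    have hmem := h𝒱.2.1 _ hx.2 _ hy.2
    have : ¬ ((nbhd (bipAdj V W) c i₀ x ∩ V') ∩ (nbhd (bipAdj V W) c i₀ y ∩ V')).Finite :=
      h𝒱np _ hmem
    exact Set.Infinite.mono (fun a ha => ⟨ha.1.1, ha.2.1⟩) this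
  have hsymm : ∀ x y, bipAdj V W x y → bipAdj V W y x := by
    intro x y h
    rcases h with h | h
    · exact Or.inr ⟨h.2, h.1⟩
    · exact Or.inl ⟨h.2, h.1⟩
  have hcase : (Ustar ∩ Vi).Infinite ∨ (Ustar ∩ Wi).Infinite := by
    by_contra h
    push_neg at h
    have hsub : Ustar ⊆ (Ustar ∩ Vi) ∪ (Ustar ∩ Wi) := by
      intro x hx
      have : x ∈ Vi ∪ Wi := by rw [hUstar] at hx; exact hx.1
      rcases this with h' | h'
      · exact Or.inl ⟨hx, h'⟩
      · exact Or.inr ⟨hx, h'⟩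
    exact hUinf ((h.1.union h.2).subset hsub)
  rcases hcase with hAinf | hAinf
  · refine key (bipAdj V W) hsymm c i₀ Vi Wi (Ustar ∩ Vi) hVV hWW
      Set.inter_subset_right hAinf ?_
    intro z hz
    have hzU : z ∈ Ustar := hz.1
    rw [hUstar] at hzU
    refine Set.Infinite.mono ?_ hzU.2
    intro x hx
    refine ⟨hx.1, ?_⟩
    rcases hx.2 with h' | h'
    · exact absurd (hViV h') (Set.disjoint_right.mp hdisj (hNsub z (hViV hz.2) hx.1))
    · exact h'
  · have := key (bipAdj V W) hsymm c i₀ Wi Vi (Ustar ∩ Wi) hWW hVV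
      Set.inter_subset_right hAinf ?_
    · obtain ⟨P, hP1, hP2⟩ := this
      exact ⟨P, hP1, by rwa [Set.union_comm]⟩
    intro z hz
    have hzU : z ∈ Ustar := hz.1
    rw [hUstar] at hzU
    refine Set.Infinite.mono ?_ hzU.2
    intro x hx
    refine ⟨hx.1, ?_⟩
    rcases hx.2 with h' | h'
    · exact h'
    · exact absurd (hWiW h') (Set.disjoint_left.mp hdisj (hNsub' z (hWiW hz.2) hx.1))
end
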